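/- arXiv:1603.01885 — 3 statements merged into one kernel-verified Lean document; each statement's English description precedes it below -/
import Mathlib

section
/- Let S be a finite totally ordered set, d ≥ 1, N ≥ 2, and let P be a PCA dynamics on S^{Z^d}. Then there exists an increasing synchronous coupling of N copies of P (i.e. of the N-tuple (P, P, ..., P)) if and only if P is attractive. -/
open MeasureTheory ProbabilityTheory Filter

abbrev Site (d : ℕ) : Type := Fin d → ℤ
abbrev Config (d : ℕ) (S : Type*) : Type _ := Site d → S

/-- Stochastic ordering of measures: `ν₁ ⪯ ν₂` iff `ν₁(f) ≤ ν₂(f)` for every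
bounded measurable increasing `f`. -/
def StochLE {α : Type*} [MeasurableSpace α] [Preorder α] (μ ν : Measure α) : Prop :=
  ∀ f : α → ℝ, Measurable f → Monotone f → (∃ C, ∀ x, |f x| ≤ C) →
    ∫ x, f x ∂μ ≤ ∫ x, f x ∂ν

/-- A (local) PCA dynamics on `S^{ℤ^d}`: a Markov kernel together with its family of
local updating rules, the kernel being the product over sites of the updating rules. -/
structure PCA (d : ℕ) (S : Type*) [MeasurableSpace S] where
  rule : Site d → Config d S → Measure S
  rule_prob : ∀ k η, IsProbabilityMeasure (rule k η)
  rule_local : ∀ k : Site d, ∃ V : Finset (Site d), ∀ η η' : Config d S,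
      (∀ j ∈ V, η j = η' j) → rule k η = rule k η'
  toKernel : Kernel (Config d S) (Config d S)
  markov : IsMarkovKernel toKernel
  product : ∀ (η : Config d S) (Λ : Finset (Site d)) (y : Site d → S),
      toKernel η {σ : Config d S | ∀ k ∈ Λ, σ k = y k} = ∏ k ∈ Λ, rule k η {y k}


/-- An `N`-tuple of PCA dynamics is increasing if ordered configurations give
stochastically ordered transition measures. -/
def IncreasingTuple {d : ℕ} {S : Type*} [MeasurableSpace S] [Preorder S] {N : ℕ}
    (P : Fin N → PCA d S) : Prop :=
  ∀ ζ : Fin N → Config d S, Monotone ζ →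
    ∀ i j : Fin N, i ≤ j → StochLE ((P i).toKernel (ζ i)) ((P j).toKernel (ζ j))

/-- A PCA dynamics is attractive if it maps bounded measurable increasing functions to
increasing functions. -/
def Attractive {d : ℕ} {S : Type*} [MeasurableSpace S] [Preorder S] (P : PCA d S) : Prop :=
  ∀ f : Config d S → ℝ, Measurable f → Monotone f → (∃ C, ∀ x, |f x| ≤ C) →
    Monotone fun η => ∫ σ, f σ ∂(P.toKernel η)

/-- A synchronous coupling of the PCA dynamics `P 1, …, P N`: a PCA on the spin space
`Fin N → S` whose site marginals are the updating rules of the `P i`. -/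
structure SyncCoupling {d : ℕ} {S : Type*} [MeasurableSpace S] {N : ℕ}
    (P : Fin N → PCA d S) where
  Q : PCA d (Fin N → S)
  marginal : ∀ (k : Site d) (ζ : Fin N → Config d S) (i : Fin N),
    ((Q.rule k fun x j => ζ j x).map fun v => v i) = (P i).rule k (ζ i)

/-- A synchronous coupling is increasing when ordered configurations are a.s. mapped to
ordered configurations. -/
def SyncCoupling.Increasing {d : ℕ} {S : Type*} [MeasurableSpace S] [Preorder S] {N : ℕ}
    {P : Fin N → PCA d S} (C : SyncCoupling P) : Prop :=
  ∀ ζ : Fin N → Config d S, Monotone ζ →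
    C.Q.toKernel (fun x j => ζ j x) {ω : Config d (Fin N → S) | ∀ x, Monotone (ω x)} = 1

set_option linter.unusedSectionVars false
set_option linter.unusedVariables false

open MeasureTheory Set

section Quantile

variable {T : Type*} [Fintype T] [Nonempty T] [LinearOrder T] [MeasurableSpace T]
  [MeasurableSingletonClass T]

lemma measurableSet_all (A : Set T) : MeasurableSet A := A.toFinite.measurableSet

noncomputable def Fc (μ : Measure T) (s : T) : ℝ := (μ {t | t ≤ s}).toReal
noncomputable def Gc (μ : Measure T) (s : T) : ℝ := (μ {t | t < s}).toReal

noncomputable def qtl (μ : Measure T) (u : ℝ) : T :=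
  if h : (Finset.univ.filter fun s => u ≤ Fc μ s).Nonempty then
    (Finset.univ.filter fun s => u ≤ Fc μ s).min' h
  else Finset.univ.max' Finset.univ_nonempty

variable {μ : Measure T}

lemma Fc_mono (s t : T) (h : s ≤ t) [IsFiniteMeasure μ] : Fc μ s ≤ Fc μ t :=
  ENNReal.toReal_mono (measure_ne_top _ _) (measure_mono fun x hx => le_trans hx h)

lemma Gc_nonneg (s : T) : 0 ≤ Gc μ s := ENNReal.toReal_nonneg

lemma Fc_le_one [IsProbabilityMeasure μ] (s : T) : Fc μ s ≤ 1 := by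
  have := measure_mono (μ := μ) (subset_univ {t | t ≤ s})
  simpa [Fc] using ENNReal.toReal_mono (by simp) this

lemma qtl_mono : Monotone (qtl μ) := by
  intro u v huv
  unfold qtl
  by_cases hv : (Finset.univ.filter fun s => v ≤ Fc μ s).Nonempty
  · have hsub : (Finset.univ.filter fun s => v ≤ Fc μ s) ⊆
        (Finset.univ.filter fun s => u ≤ Fc μ s) := by
      intro s hs
      simp only [Finset.mem_filter] at *
      exact ⟨hs.1, le_trans huv hs.2⟩
    have hu : (Finset.univ.filter fun s => u ≤ Fc μ s).Nonempty := hv.mono hsub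
    rw [dif_pos hv, dif_pos hu]
    exact Finset.min'_le _ _ (hsub (Finset.min'_mem _ hv))
  · rw [dif_neg hv]
    split
    · exact Finset.le_max' _ _ (Finset.mem_univ _)
    · exact le_refl _

lemma qtl_spec [IsProbabilityMeasure μ] {u : ℝ} (hu : u ∈ Ioc (0:ℝ) 1) :
    Gc μ (qtl μ u) < u ∧ u ≤ Fc μ (qtl μ u) := by
  have hne : (Finset.univ.filter fun s => u ≤ Fc μ s).Nonempty := by
    refine ⟨Finset.univ.max' Finset.univ_nonempty, ?_⟩
    simp only [Finset.mem_filter, Finset.mem_univ, true_and]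
    have : ({t | t ≤ Finset.univ.max' Finset.univ_nonempty} : Set T) = univ := by
      ext t; simp [Finset.le_max' _ t (Finset.mem_univ t)]
    rw [Fc, this]
    simpa using hu.2
  have hq : qtl μ u = (Finset.univ.filter fun s => u ≤ Fc μ s).min' hne := dif_pos hne
  constructor
  · -- Gc < u
    set s := qtl μ u with hs
    by_cases hlt : ∃ t, t < s
    · obtain ⟨t₀, ht₀mem, ht₀max⟩ := Finset.exists_max_image
        (Finset.univ.filter fun t => t < s) id (by
          obtain ⟨t, ht⟩ := hlt
          exact ⟨t, by simp [ht]⟩)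
      simp only [Finset.mem_filter, Finset.mem_univ, true_and] at ht₀mem
      have hset : ({t | t < s} : Set T) = {t | t ≤ t₀} := by
        ext t
        constructor
        · intro ht; exact ht₀max t (by simp only [Finset.mem_filter, Finset.mem_univ, true_and]; exact ht)
        · intro ht; exact lt_of_le_of_lt ht ht₀mem
      have : Gc μ s = Fc μ t₀ := by rw [Gc, Fc, hset]
      rw [this]
      by_contra hcon
      push_neg at hcon
      have : t₀ ∈ Finset.univ.filter fun s => u ≤ Fc μ s := by simp [hcon]
      have := Finset.min'_le _ _ this
      rw [← hq] at this
      exact absurd (lt_of_lt_of_le ht₀mem this) (lt_irrefl _)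
    · push_neg at hlt
      have : ({t | t < s} : Set T) = ∅ := by
        ext t; simp [not_lt.mpr (hlt t)]
      rw [Gc, this]
      simpa using hu.1
  · have := Finset.min'_mem _ hne
    simp only [Finset.mem_filter] at this
    rw [hq]
    exact this.2

lemma qtl_fiber [IsProbabilityMeasure μ] (s : T) :
    {u | qtl μ u = s} ∩ Ioc (0:ℝ) 1 = Ioc (Gc μ s) (Fc μ s) := by
  ext u
  simp only [mem_inter_iff, mem_setOf_eq, mem_Ioc]
  constructor
  · rintro ⟨hq, hu⟩
    have := qtl_spec (μ := μ) hu
    rw [hq] at this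
    exact ⟨this.1, this.2⟩
  · rintro ⟨hG, hF⟩
    have hu : u ∈ Ioc (0:ℝ) 1 :=
      ⟨lt_of_le_of_lt (Gc_nonneg s) hG, le_trans hF (Fc_le_one s)⟩
    have hspec := qtl_spec (μ := μ) hu
    refine ⟨?_, hu.1, hu.2⟩
    rcases lt_trichotomy (qtl μ u) s with h | h | h
    · -- qtl u < s : then Fc (qtl u) ≤ Gc s < u, contradicting u ≤ Fc (qtl u)
      exfalso
      have : Fc μ (qtl μ u) ≤ Gc μ s :=
        ENNReal.toReal_mono (measure_ne_top _ _)
          (measure_mono fun t (ht : t ≤ qtl μ u) => lt_of_le_of_lt ht h)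
      exact absurd (le_trans hspec.2 this) (not_le.mpr hG)
    · exact h
    · -- s < qtl u : then u ≤ Fc s ≤ Gc (qtl u) < u
      exfalso
      have : Fc μ s ≤ Gc μ (qtl μ u) :=
        ENNReal.toReal_mono (measure_ne_top _ _)
          (measure_mono fun t (ht : t ≤ s) => lt_of_le_of_lt ht h)
      exact absurd (le_trans hF this) (not_le.mpr hspec.1)

lemma volume_Ioc_Gc_Fc [IsProbabilityMeasure μ] (s : T) :
    volume (Ioc (Gc μ s) (Fc μ s)) = μ {s} := by
  have hsplit : μ {t | t ≤ s} = μ {t | t < s} + μ {s} := by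
    have hset : ({t | t ≤ s} : Set T) = {t | t < s} ∪ {s} := by
      ext t
      show t ≤ s ↔ t ∈ {t | t < s} ∪ {s}
      rw [mem_union]
      show t ≤ s ↔ t < s ∨ t ∈ ({s} : Set T)
      rw [mem_singleton_iff]
      exact le_iff_lt_or_eq
    rw [hset]
    exact measure_union (Set.disjoint_singleton_right.mpr (lt_irrefl s)) (measurableSet_all _)
  rw [Real.volume_Ioc, Fc, Gc, hsplit]
  rw [ENNReal.toReal_add (measure_ne_top _ _) (measure_ne_top _ _)]
  rw [add_sub_cancel_left]
  exact ENNReal.ofReal_toReal (measure_ne_top _ _)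

lemma qtl_le_qtl {μ₁ μ₂ : Measure T} (hF : ∀ s, Fc μ₂ s ≤ Fc μ₁ s) (u : ℝ) :
    qtl μ₁ u ≤ qtl μ₂ u := by
  unfold qtl
  by_cases h2 : (Finset.univ.filter fun s => u ≤ Fc μ₂ s).Nonempty
  · have hmem : (Finset.univ.filter fun s => u ≤ Fc μ₂ s).min' h2 ∈
        Finset.univ.filter fun s => u ≤ Fc μ₁ s := by
      have := Finset.min'_mem _ h2
      simp only [Finset.mem_filter, Finset.mem_univ, true_and] at this ⊢
      exact le_trans this (hF _)
    have h1 : (Finset.univ.filter fun s => u ≤ Fc μ₁ s).Nonempty := ⟨_, hmem⟩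
    rw [dif_pos h1, dif_pos h2]
    exact Finset.min'_le _ _ hmem
  · rw [dif_neg h2]
    split
    · exact Finset.le_max' _ _ (Finset.mem_univ _)
    · exact le_refl _

lemma measurable_qtl : Measurable (qtl μ) := by
  apply measurable_to_countable
  intro u
  have : OrdConnected (qtl μ ⁻¹' {qtl μ u}) := by
    constructor
    rintro a (ha : qtl μ a = _) b (hb : qtl μ b = _) c hc
    have h1 := qtl_mono (μ := μ) hc.1
    have h2 := qtl_mono (μ := μ) hc.2
    simp only [mem_preimage, mem_singleton_iff]
    rw [ha] at h1; rw [hb] at h2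
    exact le_antisymm h2 h1
  exact this.measurableSet

lemma measurable_comp_qtl {γ : Type*} [MeasurableSpace γ] (g : T → γ) :
    Measurable (fun u => g (qtl μ u)) := by
  have hg : Measurable g := fun A _ => measurableSet_all _
  exact hg.comp (measurable_qtl (μ := μ))

lemma map_qtl [IsProbabilityMeasure μ] :
    Measure.map (qtl μ) (volume.restrict (Ioc (0:ℝ) 1)) = μ := by
  apply MeasureTheory.Measure.ext_of_singleton
  intro s
  rw [Measure.map_apply measurable_qtl (measurableSet_all _),
    Measure.restrict_apply (measurable_qtl (measurableSet_all _))]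
  have : qtl μ ⁻¹' {s} = {u | qtl μ u = s} := rfl
  rw [this, qtl_fiber s]
  exact volume_Ioc_Gc_Fc s

end Quantile

section Digits

variable {T : Type*} [Fintype T] [Nonempty T] [LinearOrder T] [MeasurableSpace T]
  [MeasurableSingletonClass T]

lemma Gc_le_Fc {μ : Measure T} [IsFiniteMeasure μ] (s : T) : Gc μ s ≤ Fc μ s :=
  ENNReal.toReal_mono (measure_ne_top _ _) (measure_mono fun t ht => le_of_lt ht)

lemma Fc_sub_Gc {μ : Measure T} [IsProbabilityMeasure μ] (s : T) :
    Fc μ s - Gc μ s = (μ {s}).toReal := by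
  have h := volume_Ioc_Gc_Fc (μ := μ) s
  rw [Real.volume_Ioc] at h
  rw [← h, ENNReal.toReal_ofReal (sub_nonneg.mpr (Gc_le_Fc s))]

noncomputable def stepU (μ : Measure T) (v : ℝ) : ℝ :=
  (v - Gc μ (qtl μ v)) / (μ {qtl μ v}).toReal

noncomputable def dU (m : ℕ → Measure T) : ℕ → ℝ → ℝ
  | 0 => fun u => u
  | n + 1 => fun u => stepU (m n) (dU m n u)

noncomputable def dX (m : ℕ → Measure T) (n : ℕ) (u : ℝ) : T := qtl (m n) (dU m n u)

lemma measurable_stepU (μ : Measure T) : Measurable (stepU μ) :=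
  (measurable_id.sub (measurable_comp_qtl (Gc μ))).div
    (measurable_comp_qtl (fun s => (μ {s}).toReal))

lemma measurable_dU (m : ℕ → Measure T) (n : ℕ) : Measurable (dU m n) := by
  induction n with
  | zero => exact measurable_id
  | succ n ih => exact (measurable_stepU (m n)).comp ih

lemma measurable_dX (m : ℕ → Measure T) (n : ℕ) : Measurable (dX m n) :=
  (measurable_qtl (μ := m n)).comp (measurable_dU m n)

lemma stepU_mem_Ioc {μ : Measure T} [IsProbabilityMeasure μ] {v : ℝ}
    (hv : v ∈ Set.Ioc (0:ℝ) 1) : stepU μ v ∈ Set.Ioc (0:ℝ) 1 := by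
  obtain ⟨hG, hF⟩ := qtl_spec (μ := μ) hv
  have hc : (μ {qtl μ v}).toReal = Fc μ (qtl μ v) - Gc μ (qtl μ v) := (Fc_sub_Gc _).symm
  have hcpos : 0 < (μ {qtl μ v}).toReal := by rw [hc]; linarith
  unfold stepU
  constructor
  · exact div_pos (by linarith) hcpos
  · rw [div_le_one hcpos, hc]; linarith

lemma dU_mem_Ioc {m : ℕ → Measure T} (hm : ∀ k, IsProbabilityMeasure (m k)) {u : ℝ}
    (hu : u ∈ Set.Ioc (0:ℝ) 1) (n : ℕ) : dU m n u ∈ Set.Ioc (0:ℝ) 1 := by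
  induction n with
  | zero => exact hu
  | succ n ih =>
    haveI := hm n
    exact stepU_mem_Ioc ih

lemma dU_succ_shift (m : ℕ → Measure T) (n : ℕ) (u : ℝ) :
    dU m (n + 1) u = dU (fun i => m (i + 1)) n (stepU (m 0) u) := by
  induction n with
  | zero => rfl
  | succ n ih =>
    show stepU (m (n + 1)) (dU m (n + 1) u) =
      stepU (m (n + 1)) (dU (fun i => m (i + 1)) n (stepU (m 0) u))
    rw [ih]

lemma dX_succ_shift (m : ℕ → Measure T) (n : ℕ) (u : ℝ) :
    dX m (n + 1) u = dX (fun i => m (i + 1)) n (stepU (m 0) u) := by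
  unfold dX
  rw [dU_succ_shift]

lemma measurableSet_cyl (m : ℕ → Measure T) (n : ℕ) (y : ℕ → T) :
    MeasurableSet {u | u ∈ Set.Ioc (0:ℝ) 1 ∧ ∀ i < n, dX m i u = y i} := by
  have : {u | u ∈ Set.Ioc (0:ℝ) 1 ∧ ∀ i < n, dX m i u = y i} =
      Set.Ioc (0:ℝ) 1 ∩ ⋂ i ∈ Finset.range n, (dX m i) ⁻¹' {y i} := by
    ext u
    simp only [Set.mem_setOf_eq, Set.mem_inter_iff, Set.mem_iInter, Set.mem_preimage,
      Set.mem_singleton_iff, Finset.mem_range]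
  rw [this]
  exact measurableSet_Ioc.inter
    (Finset.measurableSet_biInter _ fun i _ => measurable_dX m i (measurableSet_all _))

lemma cylinder_full : ∀ (n : ℕ) (m : ℕ → Measure T)
    (_ : ∀ k, IsProbabilityMeasure (m k)) (y : ℕ → T),
    volume {u | u ∈ Set.Ioc (0:ℝ) 1 ∧ ∀ i < n, dX m i u = y i} =
      ∏ i ∈ Finset.range n, m i {y i} := by
  intro n
  induction n with
  | zero =>
    intro m hm y
    simp only [Nat.not_lt_zero, false_implies, implies_true, and_true, Finset.range_zero,
      Finset.prod_empty, Set.setOf_mem_eq]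
    rw [Real.volume_Ioc]
    norm_num
  | succ n IH =>
    intro m hm y
    haveI := hm 0
    set s₀ := y 0 with hs₀
    set G₀ := Gc (m 0) s₀ with hG₀
    set F₀ := Fc (m 0) s₀ with hF₀
    by_cases hc : ((m 0) {s₀}).toReal = 0
    · -- degenerate case: first factor has zero mass
      have hmass : (m 0) {s₀} = 0 := by
        have := measure_ne_top (m 0) {s₀}
        exact (ENNReal.toReal_eq_zero_iff _).mp hc |>.resolve_right this
      have hsub : {u | u ∈ Set.Ioc (0:ℝ) 1 ∧ ∀ i < n + 1, dX m i u = y i} ⊆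
          {u | qtl (m 0) u = s₀} ∩ Set.Ioc (0:ℝ) 1 := by
        rintro u ⟨hu, hcond⟩
        exact ⟨hcond 0 (Nat.succ_pos n), hu⟩
      have hnull : volume ({u | qtl (m 0) u = s₀} ∩ Set.Ioc (0:ℝ) 1) = 0 := by
        rw [qtl_fiber, volume_Ioc_Gc_Fc, hmass]
      rw [measure_mono_null hsub hnull]
      rw [Finset.prod_eq_zero (Finset.mem_range.mpr (Nat.succ_pos n)) hmass]
    · have hcpos : 0 < ((m 0) {s₀}).toReal := lt_of_le_of_ne ENNReal.toReal_nonneg (Ne.symm hc)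
      set c := ((m 0) {s₀}).toReal with hcdef
      have hFG : F₀ - G₀ = c := Fc_sub_Gc s₀
      set A := {t | t ∈ Set.Ioc (0:ℝ) 1 ∧ ∀ i < n, dX (fun i => m (i + 1)) i t = y (i + 1)}
        with hA
      have hAmeas : MeasurableSet A := measurableSet_cyl _ n _
      have hSET : {u | u ∈ Set.Ioc (0:ℝ) 1 ∧ ∀ i < n + 1, dX m i u = y i} =
          (fun u => (u - G₀) / c) ⁻¹' A := by
        ext u
        constructor
        · rintro ⟨hu, hcond⟩
          have h0 : qtl (m 0) u = s₀ := hcond 0 (Nat.succ_pos n)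
          have huIoc : u ∈ Set.Ioc G₀ F₀ := by
            rw [← qtl_fiber (μ := m 0) s₀]
            exact ⟨h0, hu⟩
          have hstep : stepU (m 0) u = (u - G₀) / c := by
            rw [stepU, h0]
          have hmem : stepU (m 0) u ∈ Set.Ioc (0:ℝ) 1 := stepU_mem_Ioc hu
          rw [Set.mem_preimage]
          show (u - G₀) / c ∈ A
          rw [← hstep]
          exact ⟨hmem, fun i hi => by
            rw [← dX_succ_shift]
            exact hcond (i + 1) (Nat.succ_lt_succ hi)⟩
        · rintro ⟨ht, hcond⟩
          have h1 : 0 < (u - G₀) / c := ht.1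
          have h2 : (u - G₀) / c ≤ 1 := ht.2
          have hu1 : G₀ < u := by
            have := (div_pos_iff.mp h1)
            rcases this with ⟨h, _⟩ | ⟨_, h⟩
            · linarith
            · linarith
          have hu2 : u ≤ F₀ := by
            rw [div_le_one hcpos] at h2
            linarith
          have huF : u ∈ Set.Ioc G₀ F₀ := ⟨hu1, hu2⟩
          have hqf := (qtl_fiber (μ := m 0) s₀).symm ▸ huF
          have h0 : qtl (m 0) u = s₀ := hqf.1
          have hu : u ∈ Set.Ioc (0:ℝ) 1 := hqf.2
          have hstep : stepU (m 0) u = (u - G₀) / c := by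
            rw [stepU, h0]
          refine ⟨hu, ?_⟩
          intro i hi
          match i, hi with
          | 0, _ => exact h0
          | (i + 1), hi =>
            rw [dX_succ_shift, hstep]
            exact hcond i (Nat.lt_of_succ_lt_succ hi)
      rw [hSET]
      have hmeas_h : Measurable (fun u : ℝ => (u - G₀) / c) :=
        (measurable_id.sub measurable_const).div measurable_const
      have hmap : volume ((fun u => (u - G₀) / c) ⁻¹' A) = ENNReal.ofReal c * volume A := by
        have heq : (fun u : ℝ => (u - G₀) / c) = (fun x : ℝ => c⁻¹ * x) ∘ (fun x : ℝ => x + -G₀) := by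
          funext x
          simp [div_eq_inv_mul, sub_eq_add_neg]
        have h1 : Measure.map (fun x : ℝ => x + -G₀) volume = volume :=
          map_add_right_eq_self volume (-G₀)
        have h2 : Measure.map (fun x : ℝ => c⁻¹ * x) volume = ENNReal.ofReal |(c⁻¹)⁻¹| • volume :=
          Real.map_volume_mul_left (inv_ne_zero (ne_of_gt hcpos))
        have := Measure.map_apply (μ := volume) hmeas_h hAmeas
        rw [← this, heq, ← Measure.map_map (by fun_prop) (by fun_prop), h1, h2]
        rw [Measure.smul_apply, inv_inv, abs_of_pos hcpos, smul_eq_mul]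
      rw [hmap, IH (fun i => m (i + 1)) (fun i => hm (i + 1)) (fun i => y (i + 1))]
      rw [Finset.prod_range_succ']
      rw [hcdef, ENNReal.ofReal_toReal (measure_ne_top _ _)]
      ring

end Digits

section Digits2

variable {T : Type*} [Fintype T] [Nonempty T] [LinearOrder T] [MeasurableSpace T]
  [MeasurableSingletonClass T]

lemma sum_univ_singleton (μ : Measure T) [IsProbabilityMeasure μ] :
    ∑ s : T, μ {s} = 1 := by
  have huniv : (Set.univ : Set T) = ⋃ s ∈ (Finset.univ : Finset T), {s} := by
    ext t; simp
  have := measure_biUnion_finset (μ := μ) (s := (Finset.univ : Finset T))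
    (f := fun s => ({s} : Set T))
    (by
      intro a _ b _ hab
      simp only [Set.disjoint_singleton_left, Set.mem_singleton_iff]
      exact hab)
    (fun s _ => measurableSet_all _)
  rw [← huniv] at this
  rw [← this, measure_univ]

lemma measurableSet_cylF (m : ℕ → Measure T) (I : Finset ℕ) (y : ℕ → T) :
    MeasurableSet {u | u ∈ Set.Ioc (0:ℝ) 1 ∧ ∀ i ∈ I, dX m i u = y i} := by
  have : {u | u ∈ Set.Ioc (0:ℝ) 1 ∧ ∀ i ∈ I, dX m i u = y i} =
      Set.Ioc (0:ℝ) 1 ∩ ⋂ i ∈ I, (dX m i) ⁻¹' {y i} := by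
    ext u
    simp only [Set.mem_setOf_eq, Set.mem_inter_iff, Set.mem_iInter, Set.mem_preimage,
      Set.mem_singleton_iff]
  rw [this]
  exact measurableSet_Ioc.inter
    (Finset.measurableSet_biInter _ fun i _ => measurable_dX m i (measurableSet_all _))

lemma cylinder_gen : ∀ (k n : ℕ) (I : Finset ℕ) (y : ℕ → T) (m : ℕ → Measure T)
    (_ : ∀ j, IsProbabilityMeasure (m j)),
    (Finset.range n \ I).card = k → I ⊆ Finset.range n →
    volume {u | u ∈ Set.Ioc (0:ℝ) 1 ∧ ∀ i ∈ I, dX m i u = y i} = ∏ i ∈ I, m i {y i} := by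
  intro k
  induction k with
  | zero =>
    intro n I y m hm hcard hsub
    have hI : I = Finset.range n :=
      Finset.Subset.antisymm hsub (Finset.sdiff_eq_empty_iff_subset.mp
        (Finset.card_eq_zero.mp hcard))
    subst hI
    have : {u | u ∈ Set.Ioc (0:ℝ) 1 ∧ ∀ i ∈ Finset.range n, dX m i u = y i} =
        {u | u ∈ Set.Ioc (0:ℝ) 1 ∧ ∀ i < n, dX m i u = y i} := by
      ext u
      simp only [Set.mem_setOf_eq, Finset.mem_range]
    rw [this, cylinder_full n m hm y]
  | succ k IH =>
    intro n I y m hm hcard hsub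
    have hne : (Finset.range n \ I).Nonempty := Finset.card_pos.mp (by omega)
    obtain ⟨j, hj⟩ := hne
    have hjn : j ∈ Finset.range n := (Finset.mem_sdiff.mp hj).1
    have hjI : j ∉ I := (Finset.mem_sdiff.mp hj).2
    have hSET : {u | u ∈ Set.Ioc (0:ℝ) 1 ∧ ∀ i ∈ I, dX m i u = y i} =
        ⋃ s ∈ (Finset.univ : Finset T),
          {u | u ∈ Set.Ioc (0:ℝ) 1 ∧ ∀ i ∈ insert j I, dX m i u = Function.update y j s i} := by
      ext u
      simp only [Set.mem_setOf_eq, Set.mem_iUnion, Finset.mem_univ, exists_true_left,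
        exists_prop, true_and]
      constructor
      · rintro ⟨hu, hcond⟩
        refine ⟨dX m j u, hu, ?_⟩
        intro i hi
        rcases Finset.mem_insert.mp hi with h | h
        · subst h; rw [Function.update_self]
        · rw [Function.update_of_ne (by rintro rfl; exact hjI h)]
          exact hcond i h
      · rintro ⟨s, hu, hcond⟩
        refine ⟨hu, fun i hi => ?_⟩
        have := hcond i (Finset.mem_insert_of_mem hi)
        rwa [Function.update_of_ne (by rintro rfl; exact hjI hi)] at this
    rw [hSET]
    rw [measure_biUnion_finset]
    · have hstep : ∀ s : T,
          volume {u | u ∈ Set.Ioc (0:ℝ) 1 ∧ ∀ i ∈ insert j I, dX m i u = Function.update y j s i}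
            = m j {s} * ∏ i ∈ I, m i {y i} := by
        intro s
        have hcard' : (Finset.range n \ insert j I).card = k := by
          rw [Finset.sdiff_insert]
          rw [Finset.card_erase_of_mem hj]
          omega
        have hsub' : insert j I ⊆ Finset.range n := Finset.insert_subset hjn hsub
        rw [IH n (insert j I) (Function.update y j s) m hm hcard' hsub']
        rw [Finset.prod_insert hjI, Function.update_self]
        congr 1
        apply Finset.prod_congr rfl
        intro i hi
        rw [Function.update_of_ne (by rintro rfl; exact hjI hi)]
      calc ∑ s : T, volume {u | u ∈ Set.Ioc (0:ℝ) 1 ∧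
            ∀ i ∈ insert j I, dX m i u = Function.update y j s i}
          = ∑ s : T, m j {s} * ∏ i ∈ I, m i {y i} := by
            exact Finset.sum_congr rfl fun s _ => hstep s
        _ = (∑ s : T, m j {s}) * ∏ i ∈ I, m i {y i} := by rw [Finset.sum_mul]
        _ = ∏ i ∈ I, m i {y i} := by rw [sum_univ_singleton (m j)]; ring
    · intro a _ b _ hab
      simp only [Set.disjoint_left, Set.mem_setOf_eq]
      rintro u ⟨hu, hconda⟩ ⟨_, hcondb⟩
      have ha := hconda j (Finset.mem_insert_self j I)
      have hb := hcondb j (Finset.mem_insert_self j I)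
      rw [Function.update_self] at ha hb
      exact hab (ha ▸ hb)
    · exact fun s _ => measurableSet_cylF m _ _

end Digits2

section ProdSet

variable {ι : Type*} {A : Type*} [MeasurableSpace A] [Fintype A] [Nonempty A]
  [MeasurableSingletonClass A]

open scoped Classical

lemma measurableSet_all' (B : Set A) : MeasurableSet B := B.toFinite.measurableSet

lemma meas_eq_sum_singletons (μ : Measure A) (B : Set A) :
    μ B = ∑ s ∈ B.toFinite.toFinset, μ {s} := by
  have hB : B = ⋃ s ∈ B.toFinite.toFinset, {s} := by
    ext t
    simp only [Set.mem_iUnion, Set.Finite.mem_toFinset, Set.mem_singleton_iff, exists_prop]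
    constructor
    · intro h; exact ⟨t, h, rfl⟩
    · rintro ⟨s, hs, rfl⟩; exact hs
  have h2 := measure_biUnion_finset (μ := μ) (s := B.toFinite.toFinset)
    (f := fun s => ({s} : Set A))
    (by
      intro a _ b _ hab
      simp only [Set.disjoint_singleton_left, Set.mem_singleton_iff]
      exact hab)
    (fun s _ => measurableSet_all' _)
  rw [← hB] at h2
  exact h2

lemma measurableSet_cylSet (Λ : Finset ι) (B : ι → Set A) :
    MeasurableSet {σ : ι → A | ∀ k ∈ Λ, σ k ∈ B k} := by
  have : {σ : ι → A | ∀ k ∈ Λ, σ k ∈ B k} = ⋂ k ∈ Λ, (fun σ : ι → A => σ k) ⁻¹' (B k) := by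
    ext σ; simp
  rw [this]
  exact Finset.measurableSet_biInter _ fun k _ => measurable_pi_apply k (measurableSet_all' _)

lemma prodSet (κ : Measure (ι → A)) (r : ι → Measure A) (Λ : Finset ι)
    (hprod : ∀ (Λ' : Finset ι) (y : ι → A),
      Λ' ⊆ Λ → κ {σ | ∀ k ∈ Λ', σ k = y k} = ∏ k ∈ Λ', r k {y k}) :
    ∀ (B : ι → Set A), κ {σ | ∀ k ∈ Λ, σ k ∈ B k} = ∏ k ∈ Λ, r k (B k) := by
  suffices h : ∀ (n : ℕ) (B : ι → Set A),
      (Λ.filter fun k => ¬ ∃ a, B k = {a}).card = n →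
      κ {σ | ∀ k ∈ Λ, σ k ∈ B k} = ∏ k ∈ Λ, r k (B k) by
    intro B
    exact h _ B rfl
  intro n
  induction n with
  | zero =>
    intro B hcard
    have hsingle : ∀ k ∈ Λ, ∃ a, B k = {a} := by
      intro k hk
      by_contra hcon
      have : k ∈ Λ.filter fun k => ¬ ∃ a, B k = {a} := Finset.mem_filter.mpr ⟨hk, hcon⟩
      rw [Finset.card_eq_zero.mp hcard] at this
      exact absurd this (Finset.notMem_empty k)
    classical
    set y : ι → A := fun k => if h : ∃ a, B k = {a} then h.choose else Classical.arbitrary A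
      with hy
    have hBy : ∀ k ∈ Λ, B k = {y k} := by
      intro k hk
      obtain ⟨a, ha⟩ := hsingle k hk
      rw [hy]
      simp only [dif_pos (⟨a, ha⟩ : ∃ a, B k = {a})]
      exact (⟨a, ha⟩ : ∃ a, B k = {a}).choose_spec
    have hset : {σ : ι → A | ∀ k ∈ Λ, σ k ∈ B k} = {σ | ∀ k ∈ Λ, σ k = y k} := by
      ext σ
      simp only [Set.mem_setOf_eq]
      constructor
      · intro h k hk
        have := h k hk
        rw [hBy k hk] at this
        exact this
      · intro h k hk
        rw [hBy k hk]
        exact h k hk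
    rw [hset, hprod Λ y (le_refl _)]
    exact (Finset.prod_congr rfl fun k hk => by rw [hBy k hk]).symm
  | succ n IH =>
    intro B hcard
    have hne : (Λ.filter fun k => ¬ ∃ a, B k = {a}).Nonempty := Finset.card_pos.mp (by omega)
    obtain ⟨j, hj⟩ := hne
    have hjΛ : j ∈ Λ := (Finset.mem_filter.mp hj).1
    have hjB : ¬ ∃ a, B j = {a} := (Finset.mem_filter.mp hj).2
    classical
    have hSET : {σ : ι → A | ∀ k ∈ Λ, σ k ∈ B k} =
        ⋃ s ∈ (B j).toFinite.toFinset, {σ : ι → A | ∀ k ∈ Λ, σ k ∈ Function.update B j {s} k} := by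
      ext σ
      simp only [Set.mem_setOf_eq, Set.mem_iUnion, exists_prop, Set.Finite.mem_toFinset]
      constructor
      · intro h
        refine ⟨σ j, h j hjΛ, fun k hk => ?_⟩
        by_cases hkj : k = j
        · subst hkj; rw [Function.update_self]; rfl
        · rw [Function.update_of_ne hkj]; exact h k hk
      · rintro ⟨s, hs, h⟩
        intro k hk
        have := h k hk
        by_cases hkj : k = j
        · subst hkj; rw [Function.update_self] at this; rw [this]; exact hs
        · rwa [Function.update_of_ne hkj] at this
    rw [hSET, measure_biUnion_finset]
    · have hpiece : ∀ s : A,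
          κ {σ : ι → A | ∀ k ∈ Λ, σ k ∈ Function.update B j {s} k} =
            r j {s} * ∏ k ∈ Λ.erase j, r k (B k) := by
        intro s
        have hcard' : (Λ.filter fun k => ¬ ∃ a, Function.update B j {s} k = {a}).card = n := by
          have : (Λ.filter fun k => ¬ ∃ a, Function.update B j {s} k = {a}) =
              (Λ.filter fun k => ¬ ∃ a, B k = {a}).erase j := by
            ext k
            simp only [Finset.mem_filter, Finset.mem_erase]
            constructor
            · rintro ⟨hk, hcon⟩
              have hkj : k ≠ j := by
                rintro rfl
                rw [Function.update_self] at hcon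
                exact hcon ⟨s, rfl⟩
              rw [Function.update_of_ne hkj] at hcon
              exact ⟨hkj, hk, hcon⟩
            · rintro ⟨hkj, hk, hcon⟩
              refine ⟨hk, ?_⟩
              rwa [Function.update_of_ne hkj]
          rw [this, Finset.card_erase_of_mem hj]
          omega
        rw [IH _ hcard']
        rw [← Finset.prod_erase_mul _ _ hjΛ, Function.update_self, mul_comm]
        congr 1
        apply Finset.prod_congr rfl
        intro k hk
        rw [Function.update_of_ne (Finset.ne_of_mem_erase hk)]
      calc ∑ s ∈ (B j).toFinite.toFinset, κ {σ : ι → A | ∀ k ∈ Λ, σ k ∈ Function.update B j {s} k}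
          = ∑ s ∈ (B j).toFinite.toFinset, r j {s} * ∏ k ∈ Λ.erase j, r k (B k) :=
            Finset.sum_congr rfl fun s _ => hpiece s
        _ = r j (B j) * ∏ k ∈ Λ.erase j, r k (B k) := by
            rw [← Finset.sum_mul, ← meas_eq_sum_singletons]
        _ = ∏ k ∈ Λ, r k (B k) := by
            rw [mul_comm, Finset.prod_erase_mul _ _ hjΛ]
    · intro a ha b hb hab
      simp only [Set.disjoint_left, Set.mem_setOf_eq]
      intro σ hσa hσb
      have h1 := hσa j hjΛ
      have h2 := hσb j hjΛ
      rw [Function.update_self] at h1 h2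
      exact hab (h1.symm.trans h2)
    · exact fun s _ => measurableSet_cylSet Λ _
end ProdSet



section CylGen

variable {ι A : Type*} [MeasurableSpace A] [Fintype A] [Nonempty A] [MeasurableSingletonClass A]

lemma isPiSystem_cyl :
    IsPiSystem {C : Set (ι → A) | ∃ (Λ : Finset ι) (y : ι → A), C = {σ | ∀ k ∈ Λ, σ k = y k}} := by
  rintro C1 ⟨Λ1, y1, rfl⟩ C2 ⟨Λ2, y2, rfl⟩ hne
  classical
  obtain ⟨σ₀, h₀1, h₀2⟩ := hne
  refine ⟨Λ1 ∪ Λ2, fun k => if k ∈ Λ1 then y1 k else y2 k, ?_⟩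
  ext σ
  simp only [Set.mem_inter_iff, Set.mem_setOf_eq, Finset.mem_union]
  constructor
  · rintro ⟨h1, h2⟩ k hk
    by_cases hk1 : k ∈ Λ1
    · rw [if_pos hk1]; exact h1 k hk1
    · rw [if_neg hk1]; exact h2 k (hk.resolve_left hk1)
  · intro h
    constructor
    · intro k hk
      have := h k (Or.inl hk)
      rwa [if_pos hk] at this
    · intro k hk
      have := h k (Or.inr hk)
      by_cases hk1 : k ∈ Λ1
      · rw [if_pos hk1] at this
        rw [this]
        exact (h₀1 k hk1).symm.trans (h₀2 k hk)
      · rwa [if_neg hk1] at this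

lemma measurableSet_cylPt (Λ : Finset ι) (y : ι → A) :
    MeasurableSet {σ : ι → A | ∀ k ∈ Λ, σ k = y k} := by
  have : {σ : ι → A | ∀ k ∈ Λ, σ k = y k} = {σ : ι → A | ∀ k ∈ Λ, σ k ∈ ({y k} : Set A)} := by
    ext σ; simp
  rw [this]
  exact measurableSet_cylSet Λ _

lemma pi_eq_gen :
    (MeasurableSpace.pi : MeasurableSpace (ι → A)) = MeasurableSpace.generateFrom
      {C : Set (ι → A) | ∃ (Λ : Finset ι) (y : ι → A), C = {σ | ∀ k ∈ Λ, σ k = y k}} := by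
  apply le_antisymm
  · apply iSup_le
    intro k
    rw [← measurable_iff_comap_le]
    intro s _
    have hset : (fun σ : ι → A => σ k) ⁻¹' s =
        ⋃ a ∈ s.toFinite.toFinset, {σ : ι → A | ∀ j ∈ ({k} : Finset ι), σ j = a} := by
      ext σ
      simp only [Set.mem_preimage, Set.mem_iUnion, Set.Finite.mem_toFinset, exists_prop,
        Set.mem_setOf_eq, Finset.mem_singleton]
      constructor
      · intro h
        exact ⟨σ k, h, fun j hj => by rw [hj]⟩
      · rintro ⟨a, ha, h⟩
        rw [h k rfl]
        exact ha
    rw [hset]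
    refine Set.Finite.measurableSet_biUnion (Set.toFinite _) ?_
    intro a _
    exact MeasurableSpace.measurableSet_generateFrom ⟨{k}, fun _ => a, rfl⟩
  · apply MeasurableSpace.generateFrom_le
    rintro C ⟨Λ, y, rfl⟩
    exact measurableSet_cylPt Λ y

end CylGen

section PCAForward

variable {d N : ℕ} {S : Type} [Fintype S] [LinearOrder S] [MeasurableSpace S]
  [MeasurableSingletonClass S]

lemma kernel_set [Nonempty S] (P : PCA d S) (η : Config d S) (Λ : Finset (Site d))
    (B : Site d → Set S) :
    P.toKernel η {σ | ∀ k ∈ Λ, σ k ∈ B k} = ∏ k ∈ Λ, P.rule k η (B k) :=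
  prodSet (P.toKernel η) (fun k => P.rule k η) Λ (fun Λ' y _ => P.product η Λ' y) B

lemma integrable_of_bdd {α : Type*} [MeasurableSpace α] {μ : Measure α} [IsProbabilityMeasure μ]
    {f : α → ℝ} (hf : AEStronglyMeasurable f μ) {Cb : ℝ} (hb : ∀ x, |f x| ≤ Cb) :
    Integrable f μ := by
  refine (integrable_const Cb).mono' hf ?_
  filter_upwards with x
  rw [Real.norm_eq_abs]
  exact hb x

lemma coupling_marginal [Nonempty S] (hN : 2 ≤ N) (P : PCA d S)
    (C : SyncCoupling (fun _ : Fin N => P)) (ζ : Fin N → Config d S) (i : Fin N) :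
    (C.Q.toKernel (fun x j => ζ j x)).map (fun ω x => ω x i) = P.toKernel (ζ i) := by
  haveI : Nonempty (Fin N) := ⟨⟨0, by omega⟩⟩
  set κ := C.Q.toKernel (fun x j => ζ j x) with hκ
  haveI : IsProbabilityMeasure κ := C.Q.markov.isProbabilityMeasure _
  haveI : IsProbabilityMeasure (P.toKernel (ζ i)) := P.markov.isProbabilityMeasure _
  have hg : Measurable (fun ω : Config d (Fin N → S) => fun x => ω x i) :=
    measurable_pi_lambda _ (fun x => (measurable_pi_apply i).comp (measurable_pi_apply x))
  haveI : IsProbabilityMeasure (κ.map (fun ω x => ω x i)) :=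
    Measure.isProbabilityMeasure_map hg.aemeasurable
  apply MeasureTheory.ext_of_generate_finite _ (pi_eq_gen (ι := Site d) (A := S)) isPiSystem_cyl
  · rintro Cyl ⟨Λ, y, rfl⟩
    rw [Measure.map_apply hg (measurableSet_cylPt Λ y)]
    have hpre : (fun ω : Config d (Fin N → S) => fun x => ω x i) ⁻¹'
        {σ : Config d S | ∀ k ∈ Λ, σ k = y k} =
        {ω : Config d (Fin N → S) | ∀ k ∈ Λ, ω k ∈ {v : Fin N → S | v i = y k}} := by
      ext ω
      simp only [Set.mem_preimage, Set.mem_setOf_eq]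
    rw [hpre]
    have hQprod := prodSet κ (fun k => C.Q.rule k (fun x j => ζ j x)) Λ
      (fun Λ' y' _ => C.Q.product (fun x j => ζ j x) Λ' y')
      (fun k => {v : Fin N → S | v i = y k})
    rw [hQprod, P.product (ζ i) Λ y]
    apply Finset.prod_congr rfl
    intro k _
    have := C.marginal k ζ i
    rw [← this, Measure.map_apply (measurable_pi_apply i) (measurableSet_singleton _)]
    rfl
  · simp

lemma forward_dir [Nonempty S] (hN : 2 ≤ N) (P : PCA d S)
    (C : SyncCoupling (fun _ : Fin N => P)) (hC : C.Increasing) : Attractive P := by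
  intro f hfm hfmono hfbdd
  intro η η' hηη'
  obtain ⟨Cb, hb⟩ := hfbdd
  set i0 : Fin N := ⟨0, by omega⟩
  set i1 : Fin N := ⟨1, by omega⟩
  classical
  set ζ : Fin N → Config d S := fun i => if i = i0 then η else η' with hζ
  have hζmono : Monotone ζ := by
    intro i j hij
    by_cases hi : i = i0
    · by_cases hj : j = i0
      · simp [hζ, hi, hj]
      · simp only [hζ, if_pos hi, if_neg hj]
        exact hηη'
    · have hj : j ≠ i0 := by
        intro hj
        apply hi
        have h2 : (j : ℕ) = 0 := by rw [hj]
        have h1 : (i : ℕ) ≤ (j : ℕ) := hij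
        have h3 : (i : ℕ) = 0 := by omega
        exact Fin.ext (by simpa [i0] using h3)
      simp [hζ, hi, hj]
  set κ := C.Q.toKernel (fun x j => ζ j x) with hκ
  haveI : IsProbabilityMeasure κ := C.Q.markov.isProbabilityMeasure _
  have hmarg0 := coupling_marginal hN P C ζ i0
  have hmarg1 := coupling_marginal hN P C ζ i1
  have hζ0 : ζ i0 = η := by simp [hζ]
  have hζ1 : ζ i1 = η' := by
    simp only [hζ, if_neg (show i1 ≠ i0 by simp [i0, i1, Fin.ext_iff])]
  have hg : ∀ i : Fin N, Measurable (fun ω : Config d (Fin N → S) => fun x => ω x i) :=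
    fun i => measurable_pi_lambda _ (fun x => (measurable_pi_apply i).comp (measurable_pi_apply x))
  have hint : ∀ i : Fin N, ∫ σ, f σ ∂(P.toKernel (ζ i)) =
      ∫ ω, f (fun x => ω x i) ∂κ := by
    intro i
    rw [← coupling_marginal hN P C ζ i]
    rw [integral_map (hg i).aemeasurable hfm.aestronglyMeasurable]
  have hmono_set : MeasurableSet {ω : Config d (Fin N → S) | ∀ x, Monotone (ω x)} := by
    have : {ω : Config d (Fin N → S) | ∀ x, Monotone (ω x)} =
        ⋂ x : Site d, (fun ω : Config d (Fin N → S) => ω x) ⁻¹' {v | Monotone v} := by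
      ext ω; simp [Set.mem_iInter]
    rw [this]
    exact MeasurableSet.iInter fun x => measurable_pi_apply x (measurableSet_all' _)
  have hae : ∀ᵐ ω ∂κ, f (fun x => ω x i0) ≤ f (fun x => ω x i1) := by
    have h1 : κ {ω : Config d (Fin N → S) | ∀ x, Monotone (ω x)} = 1 := hC ζ hζmono
    have h0 : κ {ω : Config d (Fin N → S) | ∀ x, Monotone (ω x)}ᶜ = 0 := by
      rw [measure_compl hmono_set (measure_ne_top _ _), h1, measure_univ]
      simp
    apply measure_mono_null (t := {ω : Config d (Fin N → S) | ∀ x, Monotone (ω x)}ᶜ) ?_ h0 |>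
      fun h => (ae_iff.mpr h)
    intro ω hω
    simp only [Set.mem_compl_iff, Set.mem_setOf_eq] at *
    intro hmono
    apply hω
    apply hfmono
    intro x
    exact hmono x (by simp [i0, i1, Fin.le_def])
  calc ∫ σ, f σ ∂(P.toKernel η) = ∫ ω, f (fun x => ω x i0) ∂κ := by rw [← hζ0, hint i0]
    _ ≤ ∫ ω, f (fun x => ω x i1) ∂κ := by
        apply integral_mono_ae
        · exact integrable_of_bdd ((hfm.comp (hg i0)).aestronglyMeasurable) (fun ω => hb _)
        · exact integrable_of_bdd ((hfm.comp (hg i1)).aestronglyMeasurable) (fun ω => hb _)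
        · exact hae
    _ = ∫ σ, f σ ∂(P.toKernel η') := by rw [← hζ1, hint i1]

end PCAForward


section LocComp

lemma cylinder_genF {T : Type*} [Fintype T] [Nonempty T] [LinearOrder T] [MeasurableSpace T]
    [MeasurableSingletonClass T] (m : ℕ → Measure T) (hm : ∀ j, IsProbabilityMeasure (m j))
    (I : Finset ℕ) (y : ℕ → T) :
    volume {u | u ∈ Set.Ioc (0:ℝ) 1 ∧ ∀ i ∈ I, dX m i u = y i} = ∏ i ∈ I, m i {y i} := by
  have hsub : I ⊆ Finset.range (I.sup id + 1) := by
    intro i hi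
    rw [Finset.mem_range]
    exact Nat.lt_succ_of_le (Finset.le_sup (f := id) hi)
  exact cylinder_gen _ (I.sup id + 1) I y m hm rfl hsub

lemma loc_comp {ι A β γ : Type*} [Countable ι] [MeasurableSpace A] [Fintype A] [Nonempty A]
    [MeasurableSingletonClass A] [MeasurableSpace γ]
    (c : (ι → A) → β) (V : Finset ι) (hc : ∀ η η', (∀ j ∈ V, η j = η' j) → c η = c η')
    (g : β → ℝ → γ) (hg : ∀ b, Measurable (g b))
    (w : ((ι → A) × ℝ) → ℝ) (hw : Measurable w) :
    Measurable (fun p : (ι → A) × ℝ => g (c p.1) (w p)) := by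
  classical
  set emb : ({j // j ∈ V} → A) → (ι → A) :=
    fun v j => if h : j ∈ V then v ⟨j, h⟩ else Classical.arbitrary A with hemb
  set r : (ι → A) → (ι → A) := fun η j => if h : j ∈ V then η j else Classical.arbitrary A
    with hr
  have hrc : ∀ η, c (r η) = c η := by
    intro η
    apply hc
    intro j hj
    show (if h : j ∈ V then η j else Classical.arbitrary A) = η j
    rw [dif_pos hj]
  have hrange : Set.range r ⊆ Set.range emb := by
    rintro _ ⟨η, rfl⟩
    refine ⟨fun j => η j.1, ?_⟩
    funext j
    by_cases h : j ∈ V <;> simp [hemb, hr, h]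
  have hfin : (Set.range r).Finite := (Set.finite_range emb).subset hrange
  have hrmeas : Measurable r := by
    apply measurable_pi_lambda
    intro j
    by_cases h : j ∈ V
    · simpa only [hr, dif_pos h] using measurable_pi_apply j
    · simpa only [hr, dif_neg h] using measurable_const
  have hkey : (fun p : (ι → A) × ℝ => g (c p.1) (w p)) =
      fun p => g (c (r p.1)) (w p) := by
    funext p
    rw [hrc]
  rw [hkey]
  intro B hB
  have hdec : (fun p : (ι → A) × ℝ => g (c (r p.1)) (w p)) ⁻¹' B =
      ⋃ η₀ ∈ Set.range r,
        ((fun p : (ι → A) × ℝ => r p.1) ⁻¹' {η₀}) ∩ ((fun p => g (c η₀) (w p)) ⁻¹' B) := by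
    ext p
    simp only [Set.mem_preimage, Set.mem_iUnion, Set.mem_inter_iff, Set.mem_singleton_iff,
      exists_prop]
    constructor
    · intro h
      exact ⟨r p.1, ⟨p.1, rfl⟩, rfl, h⟩
    · rintro ⟨η₀, _, hfix, hB'⟩
      rwa [← hfix] at hB'
  rw [hdec]
  refine Set.Finite.measurableSet_biUnion hfin ?_
  intro η₀ _
  refine MeasurableSet.inter ?_ (((hg (c η₀)).comp hw) hB)
  exact (hrmeas.comp measurable_fst) (measurableSet_singleton η₀)

end LocComp


section PCABackward

noncomputable def rho : Measure ℝ := volume.restrict (Set.Ioc (0:ℝ) 1)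

instance rho_prob : IsProbabilityMeasure rho := by
  constructor
  rw [rho, Measure.restrict_apply_univ, Real.volume_Ioc]
  norm_num

variable {d N : ℕ} {S : Type} [Fintype S] [LinearOrder S] [MeasurableSpace S]
  [MeasurableSingletonClass S] [Nonempty S]

lemma measurable_vqtl (μv : Fin N → Measure S) :
    Measurable (fun u => fun i => qtl (μv i) u) :=
  measurable_pi_lambda _ fun i => measurable_qtl

/-- The per-site quantile coupling of the updating rules. -/
noncomputable def siteRule (N : ℕ) (P : PCA d S) (k : Site d) (η : Config d (Fin N → S)) :
    Measure (Fin N → S) :=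
  Measure.map (fun u => fun i => qtl (P.rule k (fun x => η x i)) u) rho

instance siteRule_prob (P : PCA d S) (k : Site d) (η : Config d (Fin N → S)) :
    IsProbabilityMeasure (siteRule N P k η) :=
  Measure.isProbabilityMeasure_map (measurable_vqtl _).aemeasurable

lemma siteRule_map (P : PCA d S) (k : Site d) (η : Config d (Fin N → S)) (i : Fin N) :
    (siteRule N P k η).map (fun v => v i) = P.rule k (fun x => η x i) := by
  haveI := P.rule_prob k (fun x => η x i)
  rw [siteRule, Measure.map_map (measurable_pi_apply i) (measurable_vqtl _)]
  have : ((fun v : Fin N → S => v i) ∘ fun u => fun j => qtl (P.rule k (fun x => η x j)) u) =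
      qtl (P.rule k (fun x => η x i)) := rfl
  rw [this]
  exact map_qtl

lemma siteRule_local (P : PCA d S) (k : Site d) :
    ∃ V : Finset (Site d), ∀ η η' : Config d (Fin N → S),
      (∀ j ∈ V, η j = η' j) → siteRule N P k η = siteRule N P k η' := by
  obtain ⟨V, hV⟩ := P.rule_local k
  refine ⟨V, fun η η' hagree => ?_⟩
  unfold siteRule
  congr 1
  funext u
  funext i
  have : P.rule k (fun x => η x i) = P.rule k (fun x => η' x i) :=
    hV _ _ (fun j hj => by rw [hagree j hj])
  rw [this]

variable (LO : LinearOrder (Fin N → S)) (P : PCA d S) (e : ℕ ≃ Site d)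

/-- The sequence of site-coupling measures along the enumeration of sites. -/
noncomputable def mSeq (η : Config d (Fin N → S)) : ℕ → Measure (Fin N → S) :=
  fun n => siteRule N P (e n) η

instance mSeq_prob (η : Config d (Fin N → S)) (n : ℕ) :
    IsProbabilityMeasure (mSeq P e η n) := siteRule_prob P (e n) η

/-- The sequential digit expansion realizing the whole-configuration coupling from a single
uniform random variable. -/
noncomputable def bigFun (η : Config d (Fin N → S)) : ℝ → Config d (Fin N → S) :=
  letI := LO
  fun u x => dX (mSeq P e η) (e.symm x) u

lemma measurable_bigFun (η : Config d (Fin N → S)) : Measurable (bigFun LO P e η) := by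
  letI := LO
  exact measurable_pi_lambda _ fun x => measurable_dX _ _

noncomputable def bigMeas (η : Config d (Fin N → S)) : Measure (Config d (Fin N → S)) :=
  Measure.map (bigFun LO P e η) rho

instance bigMeas_prob (η : Config d (Fin N → S)) : IsProbabilityMeasure (bigMeas LO P e η) :=
  Measure.isProbabilityMeasure_map (measurable_bigFun LO P e η).aemeasurable

lemma bigMeas_cyl (η : Config d (Fin N → S)) (Λ : Finset (Site d)) (y : Site d → (Fin N → S)) :
    bigMeas LO P e η {σ | ∀ k ∈ Λ, σ k = y k} = ∏ k ∈ Λ, siteRule N P k η {y k} := by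
  letI := LO
  rw [bigMeas, Measure.map_apply (measurable_bigFun LO P e η) (measurableSet_cylPt Λ y)]
  have hA : MeasurableSet (bigFun LO P e η ⁻¹' {σ | ∀ k ∈ Λ, σ k = y k}) :=
    (measurable_bigFun LO P e η) (measurableSet_cylPt Λ y)
  rw [rho, Measure.restrict_apply hA]
  have hset : bigFun LO P e η ⁻¹' {σ | ∀ k ∈ Λ, σ k = y k} ∩ Set.Ioc 0 1 =
      {u | u ∈ Set.Ioc (0:ℝ) 1 ∧ ∀ i ∈ Λ.image e.symm, dX (mSeq P e η) i u = y (e i)} := by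
    ext u
    simp only [Set.mem_inter_iff, Set.mem_preimage, Set.mem_setOf_eq, Finset.mem_image]
    constructor
    · rintro ⟨hcond, hu⟩
      refine ⟨hu, ?_⟩
      rintro i ⟨k, hk, rfl⟩
      have := hcond k hk
      rwa [Equiv.apply_symm_apply]
    · rintro ⟨hu, hcond⟩
      refine ⟨?_, hu⟩
      intro k hk
      have := hcond (e.symm k) ⟨k, hk, rfl⟩
      rwa [Equiv.apply_symm_apply] at this
  rw [hset, cylinder_genF (mSeq P e η) (fun j => mSeq_prob P e η j) (Λ.image e.symm)
    (fun i => y (e i))]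
  rw [Finset.prod_image (fun k _ k' _ h => e.symm.injective h)]
  apply Finset.prod_congr rfl
  intro k _
  simp [mSeq]

lemma measurable_JU (n : ℕ) :
    Measurable (fun p : Config d (Fin N → S) × ℝ => letI := LO; dU (mSeq P e p.1) n p.2) := by
  letI := LO
  induction n with
  | zero => exact measurable_snd
  | succ n ih =>
    show Measurable (fun p : Config d (Fin N → S) × ℝ =>
      stepU (siteRule N P (e n) p.1) (dU (mSeq P e p.1) n p.2))
    obtain ⟨V, hV⟩ := siteRule_local (N := N) P (e n)
    exact loc_comp (fun η => siteRule N P (e n) η) V hV stepU (fun μ => measurable_stepU μ)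
      _ ih

lemma measurable_JX (n : ℕ) :
    Measurable (fun p : Config d (Fin N → S) × ℝ => letI := LO; dX (mSeq P e p.1) n p.2) := by
  letI := LO
  show Measurable (fun p : Config d (Fin N → S) × ℝ =>
    qtl (siteRule N P (e n) p.1) (dU (mSeq P e p.1) n p.2))
  obtain ⟨V, hV⟩ := siteRule_local (N := N) P (e n)
  exact loc_comp (fun η => siteRule N P (e n) η) V hV qtl (fun μ => measurable_qtl)
    _ (measurable_JU LO P e n)

lemma measurable_bigMeas : Measurable (bigMeas LO P e) := by
  apply Measure.measurable_of_measurable_coe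
  intro s hs
  have heq : (fun η => bigMeas LO P e η s) = fun η =>
      ∫⁻ u, s.indicator (fun _ => (1:ENNReal)) (bigFun LO P e η u) ∂rho := by
    funext η
    rw [bigMeas, Measure.map_apply (measurable_bigFun LO P e η) hs]
    rw [← lintegral_indicator_one ((measurable_bigFun LO P e η) hs)]
    congr 1
  rw [heq]
  apply Measurable.lintegral_prod_right'
    (f := fun p : Config d (Fin N → S) × ℝ => s.indicator (fun _ => (1:ENNReal))
      (bigFun LO P e p.1 p.2))
  apply ((measurable_const (a := (1:ENNReal))).indicator hs).comp
  exact measurable_pi_lambda _ fun x => measurable_JX LO P e (e.symm x)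

/-- The synchronous-coupling PCA built from quantile couplings of the updating rules. -/
noncomputable def couplingPCA : PCA d (Fin N → S) where
  rule := fun k η => siteRule N P k η
  rule_prob := fun k η => siteRule_prob P k η
  rule_local := fun k => siteRule_local P k
  toKernel := ⟨bigMeas LO P e, measurable_bigMeas LO P e⟩
  markov := ⟨fun η => bigMeas_prob LO P e η⟩
  product := fun η Λ y => bigMeas_cyl LO P e η Λ y

end PCABackward


section Mono

variable {d N : ℕ} {S : Type} [Fintype S] [LinearOrder S] [MeasurableSpace S]
  [MeasurableSingletonClass S] [Nonempty S]

lemma attr_Fc (P : PCA d S) (hattr : Attractive P) (k : Site d) {η η' : Config d S}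
    (hle : η ≤ η') (s : S) : Fc (P.rule k η') s ≤ Fc (P.rule k η) s := by
  haveI := P.rule_prob k η
  haveI := P.rule_prob k η'
  haveI : IsProbabilityMeasure (P.toKernel η) := P.markov.isProbabilityMeasure _
  haveI : IsProbabilityMeasure (P.toKernel η') := P.markov.isProbabilityMeasure _
  set A : Set (Config d S) := {σ | s < σ k} with hA
  have hAmeas : MeasurableSet A := measurable_pi_apply k (measurableSet_all {t | s < t})
  set f : Config d S → ℝ := A.indicator (fun _ => 1) with hf
  have hfm : Measurable f := measurable_const.indicator hAmeas
  have hfmono : Monotone f := by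
    intro σ σ' hσ
    by_cases hmem : σ ∈ A
    · have hmem' : σ' ∈ A := lt_of_lt_of_le hmem (hσ k)
      rw [hf, Set.indicator_of_mem hmem, Set.indicator_of_mem hmem']
    · rw [hf, Set.indicator_of_notMem hmem]
      exact Set.indicator_nonneg (fun _ _ => zero_le_one) σ'
  have hbdd : ∃ C, ∀ x, |f x| ≤ C := by
    refine ⟨1, fun x => ?_⟩
    by_cases hmem : x ∈ A
    · rw [hf, Set.indicator_of_mem hmem]; norm_num
    · rw [hf, Set.indicator_of_notMem hmem]; norm_num
  have hineq : ∫ σ, A.indicator (fun _ => (1:ℝ)) σ ∂P.toKernel η ≤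
      ∫ σ, A.indicator (fun _ => (1:ℝ)) σ ∂P.toKernel η' := hattr f hfm hfmono hbdd hle
  rw [integral_indicator_const (1:ℝ) hAmeas, integral_indicator_const (1:ℝ) hAmeas,
    smul_eq_mul, smul_eq_mul, mul_one, mul_one] at hineq
  have hK : ∀ η₀ : Config d S, P.toKernel η₀ A = P.rule k η₀ {t | s < t} := by
    intro η₀
    have hset : A = {σ : Config d S | ∀ j ∈ ({k} : Finset (Site d)), σ j ∈
        (fun _ : Site d => {t | s < t}) j} := by
      ext σ
      simp [hA]
    rw [hset, kernel_set P η₀ {k} _, Finset.prod_singleton]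
  rw [measureReal_def, measureReal_def, hK η, hK η'] at hineq
  have hsum : ∀ (η₀ : Config d S),
      ((P.rule k η₀) {t | t ≤ s}).toReal + ((P.rule k η₀) {t | s < t}).toReal = 1 := by
    intro η₀
    haveI := P.rule_prob k η₀
    have hdisj : Disjoint {t : S | t ≤ s} {t : S | s < t} := by
      rw [Set.disjoint_left]
      intro t ht ht'
      exact absurd (lt_of_le_of_lt ht ht') (lt_irrefl t)
    have huniv : ({t : S | t ≤ s} ∪ {t : S | s < t}) = Set.univ := by
      ext t
      simp [le_or_gt]
    have := measure_union (μ := P.rule k η₀) hdisj (measurableSet_all _)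
    rw [huniv, measure_univ] at this
    rw [← ENNReal.toReal_add (measure_ne_top _ _) (measure_ne_top _ _), ← this]
    simp
  have h1 := hsum η
  have h2 := hsum η'
  rw [Fc, Fc]
  linarith

lemma bigMeas_mono (LO : LinearOrder (Fin N → S)) (P : PCA d S) (e : ℕ ≃ Site d)
    (hattr : Attractive P) (ζ : Fin N → Config d S) (hζ : Monotone ζ) :
    bigMeas LO P e (fun x j => ζ j x) {ω : Config d (Fin N → S) | ∀ x, Monotone (ω x)} = 1 := by
  letI := LO
  set η : Config d (Fin N → S) := fun x j => ζ j x with hη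
  have hvec : ∀ (k : Site d) (u : ℝ), Monotone (fun i => qtl (P.rule k (fun x => η x i)) u) := by
    intro k u i j hij
    apply qtl_le_qtl
    intro s
    exact attr_Fc P hattr k (hζ hij) s
  have hnull : ∀ k, siteRule N P k η {v : Fin N → S | ¬ Monotone v} = 0 := by
    intro k
    rw [siteRule, Measure.map_apply (measurable_vqtl _) (measurableSet_all' _)]
    have hpre : (fun u => fun i => qtl (P.rule k (fun x => η x i)) u) ⁻¹'
        {v : Fin N → S | ¬ Monotone v} = ∅ :=
      Set.eq_empty_iff_forall_notMem.mpr (fun u hu => hu (hvec k u))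
    rw [hpre]
    simp
  have hatom : ∀ (k : Site d) (v : Fin N → S), siteRule N P k η {v} ≠ 0 → Monotone v := by
    intro k v hne
    by_contra hcon
    apply hne
    have hsub : ({v} : Set (Fin N → S)) ⊆ {w : Fin N → S | ¬ Monotone w} :=
      Set.singleton_subset_iff.mpr hcon
    exact measure_mono_null hsub (hnull k)
  have hpt : ∀ u ∈ Set.Ioc (0:ℝ) 1, ∀ x, Monotone (bigFun LO P e η u x) := by
    intro u hu x
    have hUmem := dU_mem_Ioc (m := mSeq P e η) (fun j => mSeq_prob P e η j) hu (e.symm x)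
    obtain ⟨hG, hF⟩ := qtl_spec (μ := mSeq P e η (e.symm x)) hUmem
    have hmass : mSeq P e η (e.symm x) {dX (mSeq P e η) (e.symm x) u} ≠ 0 := by
      intro h0
      have htr : (mSeq P e η (e.symm x) {dX (mSeq P e η) (e.symm x) u}).toReal = 0 := by
        rw [h0]; simp
      have hFG : Fc (mSeq P e η (e.symm x)) (dX (mSeq P e η) (e.symm x) u) -
          Gc (mSeq P e η (e.symm x)) (dX (mSeq P e η) (e.symm x) u) =
          (mSeq P e η (e.symm x) {dX (mSeq P e η) (e.symm x) u}).toReal :=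
        Fc_sub_Gc _
      rw [htr] at hFG
      have hGlt : Gc (mSeq P e η (e.symm x)) (dX (mSeq P e η) (e.symm x) u) <
          Fc (mSeq P e η (e.symm x)) (dX (mSeq P e η) (e.symm x) u) := lt_of_lt_of_le hG hF
      linarith
    exact hatom (e (e.symm x)) _ (by rwa [mSeq] at hmass)
  have hmonoSet : MeasurableSet {ω : Config d (Fin N → S) | ∀ x, Monotone (ω x)} := by
    have : {ω : Config d (Fin N → S) | ∀ x, Monotone (ω x)} =
        ⋂ x : Site d, (fun ω : Config d (Fin N → S) => ω x) ⁻¹' {v | Monotone v} := by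
      ext ω; simp [Set.mem_iInter]
    rw [this]
    exact MeasurableSet.iInter fun x => measurable_pi_apply x (measurableSet_all' _)
  rw [bigMeas, Measure.map_apply (measurable_bigFun LO P e η) hmonoSet]
  have hsup : Set.Ioc (0:ℝ) 1 ⊆ bigFun LO P e η ⁻¹' {ω | ∀ x, Monotone (ω x)} :=
    fun u hu => hpt u hu
  rw [rho, Measure.restrict_apply ((measurable_bigFun LO P e η) hmonoSet),
    Set.inter_eq_self_of_subset_right hsup, Real.volume_Ioc]
  norm_num

end Mono

/-- For a finite totally ordered spin space, an increasing synchronous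
coupling of `N` copies of a PCA dynamics `P` exists iff `P` is attractive. -/
theorem stmt1 {d N : ℕ} (hd : 1 ≤ d) (hN : 2 ≤ N)
    {S : Type} [Fintype S] [LinearOrder S] [MeasurableSpace S] [MeasurableSingletonClass S]
    (P : PCA d S) :
    (∃ C : SyncCoupling (fun _ : Fin N => P), C.Increasing) ↔ Attractive P := by
  rcases isEmpty_or_nonempty S with hS | hS
  · -- degenerate case: `S` is empty, so everything is vacuous
    haveI hCe : IsEmpty (Config d S) := ⟨fun η => IsEmpty.false (η (fun _ => 0))⟩
    haveI hTe : IsEmpty (Fin N → S) := ⟨fun v => IsEmpty.false (v ⟨0, by omega⟩)⟩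
    haveI hCTe : IsEmpty (Config d (Fin N → S)) := ⟨fun η => IsEmpty.false (η (fun _ => 0))⟩
    constructor
    · intro _
      intro f _ _ _ η
      exact isEmptyElim η
    · intro _
      refine ⟨⟨⟨fun k η => isEmptyElim η, fun k η => isEmptyElim η,
        fun k => ⟨∅, fun η => isEmptyElim η⟩, 0, ⟨fun η => isEmptyElim η⟩,
        fun η => isEmptyElim η⟩, fun k ζ i => isEmptyElim (ζ i)⟩, ?_⟩
      intro ζ _
      exact isEmptyElim (ζ ⟨0, by omega⟩)
  · constructor
    · rintro ⟨C, hC⟩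
      exact forward_dir hN P C hC
    · intro hattr
      haveI : Infinite (Site d) :=
        Infinite.of_injective (fun z : ℤ => (fun _ => z : Site d))
          (fun a b h => congrFun h ⟨0, hd⟩)
      haveI := Encodable.ofCountable (Site d)
      haveI := Denumerable.ofEncodableOfInfinite (Site d)
      obtain e : ℕ ≃ Site d := (Denumerable.eqv (Site d)).symm
      letI LO : LinearOrder (Fin N → S) :=
        LinearOrder.lift' (Fintype.equivFin (Fin N → S)) (Equiv.injective _)
      refine ⟨⟨couplingPCA LO P e, ?_⟩, ?_⟩
      · intro k ζ i
        exact siteRule_map P k (fun x j => ζ j x) i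
      · intro ζ hζ
        exact bigMeas_mono LO P e hattr ζ hζ
end

section
/- Let S be a finite totally ordered set and P an attractive, non-degenerate PCA dynamics on S^{Z^d}; let Λ ⊂ Λ' be finite subsets of Z^d. Then, as probability measures on S^{Λ'}, ν_{Λ'}^+ ⪯ ν_Λ^+ ⊗ δ_{+_{Λ'∖Λ}} and ν_Λ^- ⊗ δ_{-_{Λ'∖Λ}} ⪯ ν_{Λ'}^- in the stochastic order; in particular the projection of ν_{Λ'}^+ onto S^Λ is stochastically dominated by ν_Λ^+, and the projection of ν_{Λ'}^- onto S^Λ stochastically dominates ν_Λ^-. -/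
open MeasureTheory ProbabilityTheory Filter

/-- The maximal element of a nonempty finite linear order. -/
noncomputable def topS (S : Type*) [Fintype S] [LinearOrder S] [Nonempty S] : S :=
  Finset.univ.max' Finset.univ_nonempty


/-- The minimal element of a nonempty finite linear order. -/
noncomputable def botS (S : Type*) [Fintype S] [LinearOrder S] [Nonempty S] : S :=
  Finset.univ.min' Finset.univ_nonempty


/-- A PCA dynamics is non degenerate when all its updating rules give positive
probability to every spin value. -/
def NonDegenerate {d : ℕ} {S : Type*} [MeasurableSpace S] (P : PCA d S) : Prop :=
  ∀ (k : Site d) (η : Config d S) (s : S), P.rule k η {s} ≠ 0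


/-- The configuration equal to `η` on `Λ` and to `τ` outside `Λ`. -/
def fvCombine {d : ℕ} {S : Type*} (Λ : Finset (Site d)) (η : Λ → S) (τ : Config d S) :
    Config d S :=
  fun x => if h : x ∈ Λ then η ⟨x, h⟩ else τ x


/-- The transition kernel of the finite volume PCA dynamics in `Λ` with boundary
condition `τ`, as a Markov chain on `S^Λ`. -/
noncomputable def finVolKernel {d : ℕ} {S : Type*} [MeasurableSpace S] (P : PCA d S)
    (Λ : Finset (Site d)) (τ : Config d S) : (Λ → S) → Measure (Λ → S) :=
  fun η => Measure.pi fun k : Λ => P.rule k (fvCombine Λ η τ)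



section FiniteSpace
variable {T : Type*} [Fintype T] [MeasurableSpace T] [MeasurableSingletonClass T]

lemma measSet_all (s : Set T) : MeasurableSet s := s.toFinite.measurableSet

lemma measAll {β : Type*} [MeasurableSpace β] (f : T → β) : Measurable f :=
  fun _ _ => measSet_all _

lemma measure_eq_of_singletons {μ ν : Measure T} (h : ∀ x, μ {x} = ν {x}) : μ = ν := by
  ext s _
  classical
  have hs : s = ⋃ x ∈ s.toFinite.toFinset, {x} := by
    ext y
    simp only [Set.mem_iUnion, Set.mem_singleton_iff, Set.Finite.mem_toFinset]
    exact ⟨fun hy => ⟨y, hy, rfl⟩, fun ⟨x, hx, he⟩ => he ▸ hx⟩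
  rw [hs, measure_biUnion_finset, measure_biUnion_finset] <;>
    first
      | exact fun x _ y _ hxy => by simp [Set.disjoint_singleton, hxy]
      | exact fun _ _ => measSet_all _
      | exact Finset.sum_congr rfl fun x _ => h x

lemma sum_meas_singletons (μ : Measure T) : ∑ x : T, μ {x} = μ Set.univ := by
  have h1 : (⋃ x ∈ (Finset.univ : Finset T), ({x} : Set T)) = Set.univ := by simpa using Set.iUnion_of_singleton T
  rw [← h1, measure_biUnion_finset
    (fun x _ y _ hxy => by simp [Set.disjoint_singleton, hxy])
    (fun _ _ => measSet_all _)]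

lemma sum_toReal_singletons (μ : Measure T) [IsProbabilityMeasure μ] :
    ∑ x : T, (μ {x}).toReal = 1 := by
  rw [← ENNReal.toReal_sum (fun a _ => measure_ne_top μ _), sum_meas_singletons]
  simp

lemma integral_eq_point_sum (μ : Measure T) [IsProbabilityMeasure μ] (h : T → ℝ) :
    ∫ x, h x ∂μ = ∑ x, (μ {x}).toReal * h x := by
  rw [integral_fintype (Integrable.of_finite)]
  simp [smul_eq_mul, Measure.real]

lemma integral_bind_finite (μ : Measure T) [IsProbabilityMeasure μ]
    (K : T → Measure T) [hK : ∀ x, IsProbabilityMeasure (K x)] (h : T → ℝ) :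
    ∫ x, h x ∂(μ.bind K) = ∫ x, (∫ y, h y ∂(K x)) ∂μ := by
  have hbind : ∀ s : Set T, (μ.bind K) s = ∑ a, K a s * μ {a} := by
    intro s
    rw [Measure.bind_apply (measSet_all s) (measAll K).aemeasurable]
    exact lintegral_fintype _
  haveI : IsProbabilityMeasure (μ.bind K) := by
    constructor
    rw [hbind]
    simp only [measure_univ, one_mul]
    rw [sum_meas_singletons]
    simp
  rw [integral_eq_point_sum, integral_eq_point_sum]
  have : ∀ a : T, (μ {a}).toReal * ∫ y, h y ∂(K a)
      = ∑ x, (μ {a}).toReal * ((K a {x}).toReal * h x) := by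
    intro a
    rw [integral_eq_point_sum, Finset.mul_sum]
  rw [Finset.sum_congr rfl fun a _ => this a, Finset.sum_comm]
  refine Finset.sum_congr rfl fun x _ => ?_
  rw [hbind, ENNReal.toReal_sum (fun a _ => ?_), Finset.sum_mul]
  · refine Finset.sum_congr rfl fun a _ => ?_
    rw [ENNReal.toReal_mul]; ring
  · exact ENNReal.mul_ne_top (measure_ne_top _ _) (measure_ne_top _ _)

end FiniteSpace

section Chain
variable {T : Type*} [Fintype T] [MeasurableSpace T] [MeasurableSingletonClass T]

/-- Iterates of a kernel acting on functions. -/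
noncomputable def iterK (K : T → Measure T) : ℕ → (T → ℝ) → (T → ℝ)
  | 0, h => h
  | n+1, h => fun x => ∫ y, iterK K n h y ∂(K x)

lemma iterK_bound (K : T → Measure T) [∀ x, IsProbabilityMeasure (K x)]
    {h : T → ℝ} {C : ℝ} (hC : ∀ x, |h x| ≤ C) : ∀ n x, |iterK K n h x| ≤ C := by
  intro n
  induction n with
  | zero => exact hC
  | succ n ih =>
    intro x
    have := norm_integral_le_of_norm_le_const (μ := K x) (C := C)
      (f := iterK K n h) (Filter.Eventually.of_forall fun y => by
        simpa using ih y)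
    simpa [iterK] using this

lemma iterK_mono [Preorder T] (K : T → Measure T) [∀ x, IsProbabilityMeasure (K x)]
    (hmono : ∀ h : T → ℝ, Monotone h → (∃ C, ∀ x, |h x| ≤ C) →
      Monotone fun x => ∫ y, h y ∂(K x))
    {h : T → ℝ} (hm : Monotone h) {C : ℝ} (hC : ∀ x, |h x| ≤ C) :
    ∀ n, Monotone (iterK K n h) := by
  intro n
  induction n with
  | zero => exact hm
  | succ n ih =>
    exact hmono _ ih ⟨C, iterK_bound K hC n⟩

lemma iterK_stationary (K : T → Measure T) [∀ x, IsProbabilityMeasure (K x)]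
    {ν : Measure T} [IsProbabilityMeasure ν] (hν : ν.bind K = ν) (h : T → ℝ) :
    ∀ n, ∫ x, iterK K n h x ∂ν = ∫ x, h x ∂ν := by
  intro n
  induction n with
  | zero => rfl
  | succ n ih =>
    calc ∫ x, iterK K (n+1) h x ∂ν = ∫ x, (∫ y, iterK K n h y ∂(K x)) ∂ν := rfl
      _ = ∫ y, iterK K n h y ∂(ν.bind K) := (integral_bind_finite ν K _).symm
      _ = ∫ y, iterK K n h y ∂ν := by rw [hν]
      _ = ∫ x, h x ∂ν := ih

lemma doeblin_step (K : T → Measure T) [∀ x, IsProbabilityMeasure (K x)]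
    {a : T} {c : ℝ} (hc : 0 ≤ c) (hK : ∀ x, c ≤ (K x {a}).toReal)
    {h : T → ℝ} {m M : ℝ} (hm : ∀ z, m ≤ h z) (hM : ∀ z, h z ≤ M) (x y : T) :
    (∫ z, h z ∂(K x)) - (∫ z, h z ∂(K y)) ≤ (1 - c) * (M - m) := by
  classical
  have key : ∀ u : T, (∫ z, h z ∂(K u)) - c * h a
      = ∑ z, ((K u {z}).toReal - (if z = a then c else 0)) * h z := by
    intro u
    rw [integral_eq_point_sum]
    rw [Finset.sum_congr rfl (fun z _ => sub_mul ((K u {z}).toReal) _ (h z)),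
      Finset.sum_sub_distrib]
    congr 1
    simp [ite_mul]
  have coeff_nonneg : ∀ (u : T) z, 0 ≤ (K u {z}).toReal - (if z = a then c else 0) := by
    intro u z
    by_cases hz : z = a
    · subst hz; simp [sub_nonneg, hK u]
    · simp [hz, ENNReal.toReal_nonneg]
  have coeff_sum : ∀ u : T, ∑ z, ((K u {z}).toReal - (if z = a then c else 0)) = 1 - c := by
    intro u
    rw [Finset.sum_sub_distrib, sum_toReal_singletons]
    simp
  have upper : (∫ z, h z ∂(K x)) - c * h a ≤ (1 - c) * M := by
    rw [key x, ← coeff_sum x, Finset.sum_mul]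
    exact Finset.sum_le_sum fun z _ =>
      mul_le_mul_of_nonneg_left (hM z) (coeff_nonneg x z)
  have lower : (1 - c) * m ≤ (∫ z, h z ∂(K y)) - c * h a := by
    rw [key y, ← coeff_sum y, Finset.sum_mul]
    exact Finset.sum_le_sum fun z _ =>
      mul_le_mul_of_nonneg_left (hm z) (coeff_nonneg y z)
  nlinarith [upper, lower]

lemma doeblin_osc [Nonempty T] (K : T → Measure T) [∀ x, IsProbabilityMeasure (K x)]
    {a : T} {c : ℝ} (hc : 0 ≤ c) (hc1 : c ≤ 1) (hK : ∀ x, c ≤ (K x {a}).toReal)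
    {h : T → ℝ} {m M : ℝ} (hm : ∀ z, m ≤ h z) (hM : ∀ z, h z ≤ M) :
    ∀ n x y, iterK K n h x - iterK K n h y ≤ (1 - c) ^ n * (M - m) := by
  intro n
  induction n with
  | zero => intro x y; simpa [iterK] using sub_le_sub (hM x) (hm y)
  | succ n ih =>
    intro x y
    set g := iterK K n h with hg
    have hne : (Finset.univ : Finset T).Nonempty := Finset.univ_nonempty
    set Mn := Finset.univ.sup' hne g with hMn
    set mn := Finset.univ.inf' hne g with hmn
    have hgM : ∀ z, g z ≤ Mn := fun z => Finset.le_sup' g (Finset.mem_univ z)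
    have hgm : ∀ z, mn ≤ g z := fun z => Finset.inf'_le g (Finset.mem_univ z)
    have hosc : Mn - mn ≤ (1 - c) ^ n * (M - m) := by
      obtain ⟨w, -, hw⟩ := Finset.exists_mem_eq_sup' hne g
      obtain ⟨v, -, hv⟩ := Finset.exists_mem_eq_inf' hne g
      rw [hMn, hmn, hw, hv]
      exact ih w v
    have step := doeblin_step K hc hK hgm hgM x y
    calc iterK K (n+1) h x - iterK K (n+1) h y ≤ (1 - c) * (Mn - mn) := step
      _ ≤ (1 - c) * ((1 - c) ^ n * (M - m)) :=
          mul_le_mul_of_nonneg_left hosc (by linarith)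
      _ = (1 - c) ^ (n+1) * (M - m) := by ring

/-- The main abstract comparison lemma between two stationary chains. -/
lemma chainCompare {T' : Type*} [Fintype T'] [MeasurableSpace T']
    [MeasurableSingletonClass T'] [Nonempty T] [Nonempty T']
    [Preorder T]
    (K : T → Measure T) (K' : T' → Measure T')
    [∀ x, IsProbabilityMeasure (K x)] [∀ x, IsProbabilityMeasure (K' x)]
    (π : T' → T) (f : T' → ℝ) (g : T → ℝ) (C : ℝ)
    (hfC : ∀ x, |f x| ≤ C) (hgC : ∀ x, |g x| ≤ C)
    (hfg : ∀ η', f η' ≤ g (π η'))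
    (hg : Monotone g)
    (hcomp : ∀ h : T → ℝ, Monotone h → (∃ D, ∀ x, |h x| ≤ D) → ∀ η' : T',
      ∫ x, h (π x) ∂(K' η') ≤ ∫ x, h x ∂(K (π η')))
    (hmono : ∀ h : T → ℝ, Monotone h → (∃ D, ∀ x, |h x| ≤ D) →
      Monotone fun x => ∫ y, h y ∂(K x))
    {a : T} {c : ℝ} (hc : 0 < c) (hK : ∀ x, c ≤ (K x {a}).toReal)
    {a' : T'} {c' : ℝ} (hc' : 0 < c') (hK' : ∀ x, c' ≤ (K' x {a'}).toReal)
    (ν : Measure T) (ν' : Measure T')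
    [IsProbabilityMeasure ν] [IsProbabilityMeasure ν']
    (hν : ν.bind K = ν) (hν' : ν'.bind K' = ν') :
    ∫ x, f x ∂ν' ≤ ∫ x, g x ∂ν := by
  have hC0 : 0 ≤ C := le_trans (abs_nonneg _) (hfC (Classical.arbitrary T'))
  have hc1 : c ≤ 1 := le_trans (hK (Classical.arbitrary T))
    (ENNReal.toReal_le_of_le_ofReal one_pos.le (by simpa using prob_le_one))
  have hc1' : c' ≤ 1 := le_trans (hK' (Classical.arbitrary T'))
    (ENNReal.toReal_le_of_le_ofReal one_pos.le (by simpa using prob_le_one))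
  -- comparison of iterates
  have hiter : ∀ n (η' : T'), iterK K' n f η' ≤ iterK K n g (π η') := by
    intro n
    induction n with
    | zero => exact hfg
    | succ n ih =>
      intro η'
      have h1 : ∫ y, iterK K' n f y ∂(K' η') ≤ ∫ y, iterK K n g (π y) ∂(K' η') :=
        integral_mono (Integrable.of_finite) (Integrable.of_finite) ih
      have h2 : ∫ y, iterK K n g (π y) ∂(K' η') ≤ ∫ y, iterK K n g y ∂(K (π η')) :=
        hcomp _ (iterK_mono K hmono hg hgC n) ⟨C, iterK_bound K hgC n⟩ η'
      exact le_trans h1 h2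
  -- Doeblin oscillation bounds
  have hoscf : ∀ n x y, iterK K' n f x - iterK K' n f y ≤ (1 - c') ^ n * (2 * C) := by
    intro n x y
    have := doeblin_osc K' hc'.le hc1' hK' (m := -C) (M := C)
      (fun z => neg_le_of_abs_le (hfC z)) (fun z => le_of_abs_le (hfC z)) n x y
    calc iterK K' n f x - iterK K' n f y ≤ (1 - c') ^ n * (C - (-C)) := this
      _ = (1 - c') ^ n * (2 * C) := by ring
  have hoscg : ∀ n x y, iterK K n g x - iterK K n g y ≤ (1 - c) ^ n * (2 * C) := by
    intro n x y
    have := doeblin_osc K hc.le hc1 hK (m := -C) (M := C)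
      (fun z => neg_le_of_abs_le (hgC z)) (fun z => le_of_abs_le (hgC z)) n x y
    calc iterK K n g x - iterK K n g y ≤ (1 - c) ^ n * (C - (-C)) := this
      _ = (1 - c) ^ n * (2 * C) := by ring
  -- main inequality for each n
  have hmain : ∀ n, ∫ x, f x ∂ν' ≤ ∫ x, g x ∂ν
      + (1 - c') ^ n * (2 * C) + (1 - c) ^ n * (2 * C) := by
    intro n
    have e1 : ∫ x, f x ∂ν' = ∫ x, iterK K' n f x ∂ν' :=
      (iterK_stationary K' hν' f n).symm
    have e2 : ∫ x, g x ∂ν = ∫ x, iterK K n g x ∂ν :=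
      (iterK_stationary K hν g n).symm
    -- pick a reference point
    obtain ⟨η₀⟩ := ‹Nonempty T'›
    have b1 : ∫ x, iterK K' n f x ∂ν' ≤ iterK K' n f η₀ + (1 - c') ^ n * (2 * C) := by
      have : ∀ x, iterK K' n f x ≤ iterK K' n f η₀ + (1 - c') ^ n * (2 * C) :=
        fun x => by linarith [hoscf n x η₀]
      calc ∫ x, iterK K' n f x ∂ν'
          ≤ ∫ _, (iterK K' n f η₀ + (1 - c') ^ n * (2 * C)) ∂ν' :=
            integral_mono (Integrable.of_finite) (Integrable.of_finite) this
        _ = iterK K' n f η₀ + (1 - c') ^ n * (2 * C) := by simp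
    have b2 : iterK K' n f η₀ ≤ iterK K n g (π η₀) := hiter n η₀
    have b3 : iterK K n g (π η₀) ≤ ∫ x, iterK K n g x ∂ν + (1 - c) ^ n * (2 * C) := by
      have : ∀ x, iterK K n g (π η₀) - (1 - c) ^ n * (2 * C) ≤ iterK K n g x :=
        fun x => by linarith [hoscg n (π η₀) x]
      have h4 : iterK K n g (π η₀) - (1 - c) ^ n * (2 * C)
          ≤ ∫ x, iterK K n g x ∂ν := by
        calc iterK K n g (π η₀) - (1 - c) ^ n * (2 * C)
            = ∫ _, (iterK K n g (π η₀) - (1 - c) ^ n * (2 * C)) ∂ν := by simp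
          _ ≤ ∫ x, iterK K n g x ∂ν :=
            integral_mono (Integrable.of_finite) (Integrable.of_finite) this
      linarith
    rw [e1, e2]
    linarith
  -- take the limit
  have hlim : Filter.Tendsto
      (fun n => ∫ x, g x ∂ν + (1 - c') ^ n * (2 * C) + (1 - c) ^ n * (2 * C))
      Filter.atTop (nhds (∫ x, g x ∂ν + 0 * (2 * C) + 0 * (2 * C))) := by
    refine Filter.Tendsto.add (Filter.Tendsto.add tendsto_const_nhds ?_) ?_
    · exact (tendsto_pow_atTop_nhds_zero_of_abs_lt_one
        (by rw [abs_lt]; constructor <;> linarith)).mul_const _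
    · exact (tendsto_pow_atTop_nhds_zero_of_abs_lt_one
        (by rw [abs_lt]; constructor <;> linarith)).mul_const _
  have := ge_of_tendsto' hlim hmain
  simpa using this

end Chain

section PCAlemmas
variable {d : ℕ} {S : Type} [Fintype S] [LinearOrder S] [Nonempty S]
  [MeasurableSpace S] [MeasurableSingletonClass S]

lemma le_topS (s : S) : s ≤ topS S := Finset.le_max' _ _ (Finset.mem_univ _)
lemma botS_le (s : S) : botS S ≤ s := Finset.min'_le _ _ (Finset.mem_univ _)

lemma measurable_restrict (Λ : Finset (Site d)) :
    Measurable (fun σ : Config d S => fun k : Λ => σ ↑k) :=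
  measurable_pi_lambda _ fun k => measurable_pi_apply _

lemma monotone_restrict (Λ : Finset (Site d)) :
    Monotone (fun σ : Config d S => fun k : Λ => σ ↑k) :=
  fun _ _ h k => h ↑k

lemma map_restrict (P : PCA d S) (η : Config d S) (Λ : Finset (Site d)) :
    (P.toKernel η).map (fun σ (k : Λ) => σ ↑k)
      = Measure.pi (fun k : Λ => P.rule ↑k η) := by
  haveI := P.markov
  haveI : ∀ k : Λ, IsProbabilityMeasure (P.rule ↑k η) := fun k => P.rule_prob _ _
  refine measure_eq_of_singletons fun y => ?_
  rw [Measure.map_apply (measurable_restrict Λ) (measSet_all _)]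
  have hpre : (fun σ : Config d S => fun k : Λ => σ ↑k) ⁻¹' {y}
      = {σ : Config d S | ∀ k ∈ Λ, σ k = (fvCombine Λ y (fun _ => topS S)) k} := by
    ext σ
    simp only [Set.mem_preimage, Set.mem_singleton_iff, Set.mem_setOf_eq, funext_iff]
    constructor
    · intro hσ k hk
      have := hσ ⟨k, hk⟩
      simpa [fvCombine, hk] using this
    · intro hσ k
      have := hσ ↑k k.2
      simpa [fvCombine, k.2] using this
  rw [hpre, P.product]
  have hsing : ({y} : Set (Λ → S)) = Set.univ.pi fun k => {y k} := by
    ext z; simp [funext_iff, Set.mem_pi]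
  rw [hsing, Measure.pi_pi, ← Finset.prod_coe_sort Λ]
  refine Finset.prod_congr rfl fun k _ => ?_
  congr 1
  simp [fvCombine, k.2]

lemma finVolKernel_eq_map (P : PCA d S) (Λ : Finset (Site d)) (τ : Config d S)
    (η : Λ → S) :
    finVolKernel P Λ τ η = (P.toKernel (fvCombine Λ η τ)).map (fun σ (k : Λ) => σ ↑k) :=
  (map_restrict P _ Λ).symm

instance finVol_prob (P : PCA d S) (Λ : Finset (Site d)) (τ : Config d S) (η : Λ → S) :
    IsProbabilityMeasure (finVolKernel P Λ τ η) := by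
  haveI : ∀ k : Λ, IsProbabilityMeasure (P.rule ↑k (fvCombine Λ η τ)) :=
    fun k => P.rule_prob _ _
  unfold finVolKernel
  infer_instance

lemma integral_finVol (P : PCA d S) (Λ : Finset (Site d)) (τ : Config d S)
    (η : Λ → S) (h : (Λ → S) → ℝ) :
    ∫ x, h x ∂(finVolKernel P Λ τ η)
      = ∫ σ, h (fun k : Λ => σ ↑k) ∂(P.toKernel (fvCombine Λ η τ)) := by
  rw [finVolKernel_eq_map,
    integral_map (measurable_restrict Λ).aemeasurable (measAll h).aestronglyMeasurable]

lemma mono_toKernel (P : PCA d S) (hA : Attractive P) (Λ : Finset (Site d))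
    (h : (Λ → S) → ℝ) (hm : Monotone h) (C : ℝ) (hC : ∀ x, |h x| ≤ C)
    {ξ1 ξ2 : Config d S} (hξ : ξ1 ≤ ξ2) :
    ∫ σ, h (fun k : Λ => σ ↑k) ∂(P.toKernel ξ1)
      ≤ ∫ σ, h (fun k : Λ => σ ↑k) ∂(P.toKernel ξ2) :=
  hA _ ((measAll h).comp (measurable_restrict Λ)) (hm.comp (monotone_restrict Λ))
    ⟨C, fun x => hC _⟩ hξ

lemma finVol_mono (P : PCA d S) (hA : Attractive P) (Λ : Finset (Site d))
    (τ : Config d S) (h : (Λ → S) → ℝ) (hm : Monotone h)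
    (hb : ∃ C, ∀ x, |h x| ≤ C) :
    Monotone fun η => ∫ x, h x ∂(finVolKernel P Λ τ η) := by
  obtain ⟨C, hC⟩ := hb
  intro η1 η2 hη
  simp only []
  rw [integral_finVol, integral_finVol]
  refine mono_toKernel P hA Λ h hm C hC ?_
  intro x
  by_cases hx : x ∈ Λ
  · simp [fvCombine, hx, hη ⟨x, hx⟩]
  · simp [fvCombine, hx]

lemma finVol_singleton (P : PCA d S) (Λ : Finset (Site d)) (τ : Config d S)
    (η : Λ → S) (y : Λ → S) :
    finVolKernel P Λ τ η {y} = ∏ k : Λ, P.rule ↑k (fvCombine Λ η τ) {y k} := by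
  have hsing : ({y} : Set (Λ → S)) = Set.univ.pi fun k => {y k} := by
    ext z; simp [funext_iff, Set.mem_pi]
  haveI : ∀ k : Λ, IsProbabilityMeasure (P.rule ↑k (fvCombine Λ η τ)) :=
    fun k => P.rule_prob _ _
  rw [finVolKernel, hsing, Measure.pi_pi]

lemma finVol_pos (P : PCA d S) (hND : NonDegenerate P) (Λ : Finset (Site d))
    (τ : Config d S) (η : Λ → S) (y : Λ → S) :
    0 < (finVolKernel P Λ τ η {y}).toReal := by
  rw [finVol_singleton]
  refine ENNReal.toReal_pos ?_ ?_
  · rw [Finset.prod_ne_zero_iff]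
    exact fun k _ => hND _ _ _
  · refine (lt_of_le_of_lt ?_ (lt_top_iff_ne_top.2 ENNReal.one_ne_top)).ne
    calc ∏ k : Λ, P.rule ↑k (fvCombine Λ η τ) {y k}
        ≤ ∏ k : Λ, 1 := Finset.prod_le_prod' fun k _ => by
          haveI := P.rule_prob ↑k (fvCombine Λ η τ)
          exact prob_le_one
      _ = 1 := Finset.prod_const_one

end PCAlemmas

section Comp
variable {d : ℕ} {S : Type} [Fintype S] [LinearOrder S] [Nonempty S]
  [MeasurableSpace S] [MeasurableSingletonClass S]

lemma hcomp_plus (P : PCA d S) (hA : Attractive P) {Λ Λ' : Finset (Site d)}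
    (hΛ : Λ ⊆ Λ') (h : (Λ → S) → ℝ) (hm : Monotone h)
    (C : ℝ) (hC : ∀ x, |h x| ≤ C) (η' : Λ' → S) :
    ∫ x, h (fun k : Λ => x ⟨↑k, hΛ k.2⟩) ∂(finVolKernel P Λ' (fun _ => topS S) η')
      ≤ ∫ x, h x ∂(finVolKernel P Λ (fun _ => topS S)
          (fun k : Λ => η' ⟨↑k, hΛ k.2⟩)) := by
  rw [integral_finVol, integral_finVol]
  refine le_trans (le_of_eq rfl) (mono_toKernel P hA Λ h hm C hC ?_)
  intro x
  by_cases hx : x ∈ Λ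
  · simp [fvCombine, hx, hΛ hx]
  · by_cases hx' : x ∈ Λ'
    · simp [fvCombine, hx, hx', le_topS]
    · simp [fvCombine, hx, hx']

lemma hcomp_minus (P : PCA d S) {Λ Λ' : Finset (Site d)} (hΛ : Λ ⊆ Λ')
    (h : (Λ' → S) → ℝ) (hm : Monotone h) (η : Λ → S) :
    ∫ x, h (fun k : Λ' => if hk : ↑k ∈ Λ then x ⟨↑k, hk⟩ else botS S)
        ∂(finVolKernel P Λ (fun _ => botS S) η)
      ≤ ∫ x, h x ∂(finVolKernel P Λ' (fun _ => botS S)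
          (fun k : Λ' => if hk : ↑k ∈ Λ then η ⟨↑k, hk⟩ else botS S)) := by
  have hcfg : fvCombine Λ' (fun k : Λ' => if hk : ↑k ∈ Λ then η ⟨↑k, hk⟩ else botS S)
      (fun _ => botS S) = fvCombine Λ η (fun _ => botS S) := by
    funext x
    by_cases hx : x ∈ Λ
    · simp [fvCombine, hx, hΛ hx]
    · by_cases hx' : x ∈ Λ'
      · simp [fvCombine, hx, hx']
      · simp [fvCombine, hx, hx']
  have e1 : ∫ x, h (fun k : Λ' => if hk : ↑k ∈ Λ then x ⟨↑k, hk⟩ else botS S)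
        ∂(finVolKernel P Λ (fun _ => botS S) η)
      = ∫ ω, h (fun k : Λ' => if hk : ↑k ∈ Λ then ω ⟨↑k, hΛ hk⟩ else botS S)
        ∂(finVolKernel P Λ' (fun _ => botS S)
          (fun k : Λ' => if hk : ↑k ∈ Λ then η ⟨↑k, hk⟩ else botS S)) := by
    rw [integral_finVol, integral_finVol, hcfg]
  rw [e1]
  refine integral_mono Integrable.of_finite Integrable.of_finite fun ω => ?_
  refine hm fun k => ?_
  by_cases hk : (↑k : Site d) ∈ Λ
  · simp only [hk, dif_pos]
    rw [show (⟨↑k, hΛ hk⟩ : { x // x ∈ Λ' }) = k from Subtype.coe_eta _ _]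
  · simp [hk, botS_le]

lemma doeb {d : ℕ} {S : Type} [Fintype S] [LinearOrder S] [Nonempty S]
    [MeasurableSpace S] [MeasurableSingletonClass S]
    (P : PCA d S) (hND : NonDegenerate P) (Λ₀ : Finset (Site d)) (τ : Config d S) :
    ∃ c > (0:ℝ), ∀ η : Λ₀ → S,
      c ≤ ((finVolKernel P Λ₀ τ η) {fun _ => topS S}).toReal := by
  refine ⟨Finset.univ.inf' Finset.univ_nonempty
    (fun η : Λ₀ → S => ((finVolKernel P Λ₀ τ η) {fun _ => topS S}).toReal), ?_, ?_⟩
  · rw [gt_iff_lt, Finset.lt_inf'_iff]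
    exact fun η _ => finVol_pos P hND Λ₀ τ η _
  · exact fun η => Finset.inf'_le _ (Finset.mem_univ η)

end Comp

/-- Comparison of extremal finite-volume stationary measures in nested
volumes: `ν_{Λ'}^+ ⪯ ν_Λ^+ ⊗ δ_+` and `ν_Λ^- ⊗ δ_- ⪯ ν_{Λ'}^-`, and in particular the
`Λ`-projections are comparable to `ν_Λ^±`. -/
theorem stmt8 {d : ℕ} (hd : 1 ≤ d)
    {S : Type} [Fintype S] [LinearOrder S] [Nonempty S]
    [MeasurableSpace S] [MeasurableSingletonClass S]
    (P : PCA d S) (hA : Attractive P) (hND : NonDegenerate P)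
    (Λ Λ' : Finset (Site d)) (hΛ : Λ ⊆ Λ')
    (νm νp : Measure (Λ → S)) (νm' νp' : Measure (Λ' → S))
    (hνm : IsProbabilityMeasure νm) (hνp : IsProbabilityMeasure νp)
    (hνm' : IsProbabilityMeasure νm') (hνp' : IsProbabilityMeasure νp')
    (hm : νm.bind (finVolKernel P Λ fun _ => botS S) = νm)
    (hp : νp.bind (finVolKernel P Λ fun _ => topS S) = νp)
    (hm' : νm'.bind (finVolKernel P Λ' fun _ => botS S) = νm')
    (hp' : νp'.bind (finVolKernel P Λ' fun _ => topS S) = νp') :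
    StochLE νp'
      (νp.map fun (ω : Λ → S) (k : Λ') => if h : ↑k ∈ Λ then ω ⟨↑k, h⟩ else topS S) ∧
    StochLE
      (νm.map fun (ω : Λ → S) (k : Λ') => if h : ↑k ∈ Λ then ω ⟨↑k, h⟩ else botS S) νm' ∧
    StochLE (νp'.map fun (ω : Λ' → S) (k : Λ) => ω ⟨↑k, hΛ k.2⟩) νp ∧
    StochLE νm (νm'.map fun (ω : Λ' → S) (k : Λ) => ω ⟨↑k, hΛ k.2⟩) := by
  haveI := hνm; haveI := hνp; haveI := hνm'; haveI := hνp'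
  classical
  obtain ⟨c1, hc1, hK1⟩ := doeb P hND Λ (fun _ => topS S)
  obtain ⟨c1', hc1', hK1'⟩ := doeb P hND Λ' (fun _ => topS S)
  obtain ⟨c2, hc2, hK2⟩ := doeb P hND Λ' (fun _ => botS S)
  obtain ⟨c2', hc2', hK2'⟩ := doeb P hND Λ (fun _ => botS S)
  -- Claim 1 core inequality
  have claim1 : ∀ f : (Λ' → S) → ℝ, Monotone f → ∀ C : ℝ, (∀ x, |f x| ≤ C) →
      ∫ x, f x ∂νp' ≤ ∫ ω, f (fun k : Λ' => if h : ↑k ∈ Λ then ω ⟨↑k, h⟩ else topS S)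
        ∂νp := by
    intro f hfm C hC
    refine chainCompare (finVolKernel P Λ (fun _ => topS S))
      (finVolKernel P Λ' (fun _ => topS S))
      (fun ω (k : Λ) => ω ⟨↑k, hΛ k.2⟩) f
      (fun ω : Λ → S => f (fun k : Λ' => if h : ↑k ∈ Λ then ω ⟨↑k, h⟩ else topS S)) C
      hC (fun ω => hC _) ?_ ?_ ?_ ?_ hc1 hK1 hc1' hK1' νp νp' hp hp'
    · -- hfg
      intro η'
      refine hfm fun k => ?_
      by_cases hk : (↑k : Site d) ∈ Λ
      · simp only [hk, dif_pos]
        rw [show (⟨↑k, hΛ hk⟩ : { x // x ∈ Λ' }) = k from Subtype.coe_eta _ _]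
      · simp [hk, le_topS]
    · -- hg monotone
      intro ω1 ω2 hω
      refine hfm fun k => ?_
      by_cases hk : (↑k : Site d) ∈ Λ
      · simpa [hk] using hω ⟨↑k, hk⟩
      · simp [hk]
    · -- hcomp
      intro h hhm ⟨D, hD⟩ η'
      exact hcomp_plus P hA hΛ h hhm D hD η'
    · -- hmono
      intro h hhm hb
      exact finVol_mono P hA Λ _ h hhm hb
  -- Claim 2 core inequality
  have claim2 : ∀ f : (Λ' → S) → ℝ, Monotone f → ∀ C : ℝ, (∀ x, |f x| ≤ C) →
      ∫ ω, f (fun k : Λ' => if h : ↑k ∈ Λ then ω ⟨↑k, h⟩ else botS S) ∂νm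
        ≤ ∫ x, f x ∂νm' := by
    intro f hfm C hC
    refine chainCompare (finVolKernel P Λ' (fun _ => botS S))
      (finVolKernel P Λ (fun _ => botS S))
      (fun ω (k : Λ') => if h : ↑k ∈ Λ then ω ⟨↑k, h⟩ else botS S)
      (fun ω : Λ → S => f (fun k : Λ' => if h : ↑k ∈ Λ then ω ⟨↑k, h⟩ else botS S))
      f C (fun ω => hC _) hC (fun η => le_refl _) hfm ?_ ?_
      hc2 hK2 hc2' hK2' νm' νm hm' hm
    · -- hcomp
      intro h hhm _ η
      exact hcomp_minus P hΛ h hhm η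
    · -- hmono
      intro h hhm hb
      exact finVol_mono P hA Λ' _ h hhm hb
  refine ⟨?_, ?_, ?_, ?_⟩
  · -- StochLE νp' (νp.map u⁺)
    intro f _ hfm ⟨C, hC⟩
    rw [integral_map (measAll _).aemeasurable (measAll f).aestronglyMeasurable]
    exact claim1 f hfm C hC
  · -- StochLE (νm.map u⁻) νm'
    intro f _ hfm ⟨C, hC⟩
    rw [integral_map (measAll _).aemeasurable (measAll f).aestronglyMeasurable]
    exact claim2 f hfm C hC
  · -- projection claim for +
    intro f _ hfm ⟨C, hC⟩
    rw [integral_map (measAll _).aemeasurable (measAll f).aestronglyMeasurable]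
    have := claim1 (fun ω : Λ' → S => f (fun k : Λ => ω ⟨↑k, hΛ k.2⟩))
      (fun ω1 ω2 hω => hfm fun k => hω _) C (fun ω => hC _)
    refine le_trans this (le_of_eq ?_)
    refine integral_congr_ae (Filter.Eventually.of_forall fun ω => ?_)
    exact congrArg f (funext fun k => by simp [k.2])
  · -- projection claim for -
    intro f _ hfm ⟨C, hC⟩
    rw [integral_map (measAll _).aemeasurable (measAll f).aestronglyMeasurable]
    have := claim2 (fun ω : Λ' → S => f (fun k : Λ => ω ⟨↑k, hΛ k.2⟩))
      (fun ω1 ω2 hω => hfm fun k => hω _) C (fun ω => hC _)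
    refine le_trans (le_of_eq ?_) this
    refine integral_congr_ae (Filter.Eventually.of_forall fun ω => ?_)
    exact (congrArg f (funext fun k => by simp [k.2])).symm
end

section
/- Let S be a finite totally ordered set and P an attractive PCA dynamics on S^{Z^d}; let Λ ⊂ Z^d be finite and N ≥ 2. Then the N-tuple (P_Λ^-, P, ..., P, P_Λ^+), consisting of the finite-volume dynamics with minimal boundary condition, N−2 copies of P, and the finite-volume dynamics with maximal boundary condition (all viewed as PCA dynamics on S^{Z^d}), is increasing; consequently an increasing synchronous coupling P_Λ^- ⪯⊗ P ⪯⊗ ... ⪯⊗ P ⪯⊗ P_Λ^+ exists. -/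
open MeasureTheory ProbabilityTheory Filter

/-- The updating rule of the finite volume PCA dynamics in `Λ` with boundary condition `τ`,
seen as a PCA on the whole configuration space: inside `Λ` the rule of `P` applied to the
configuration patched with `τ` outside `Λ`, outside `Λ` the spin is frozen at `τ`. -/
noncomputable def fvRule {d : ℕ} {S : Type*} [MeasurableSpace S] (P : PCA d S)
    (Λ : Finset (Site d)) (τ : Config d S) (k : Site d) (η : Config d S) : Measure S :=
  if k ∈ Λ then P.rule k (fun x => if x ∈ Λ then η x else τ x) else Measure.dirac (τ k)



namespace Stmt13Aux

open scoped Classical ENNReal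
set_option linter.unusedSectionVars false

variable {A : Type} [Fintype A] [Nonempty A] [LinearOrder A]

/-! ### Digit expansion machinery -/

noncomputable def low (q : A → ℝ) (a : A) : ℝ := ∑ b ∈ Finset.univ.filter (· < a), q b

noncomputable def hi (q : A → ℝ) (a : A) : ℝ := low q a + q a

lemma hi_eq (q : A → ℝ) (a : A) : hi q a = ∑ b ∈ Finset.univ.filter (· ≤ a), q b := by
  have : Finset.univ.filter (· ≤ a) = insert a (Finset.univ.filter (· < a)) := by
    ext b
    simp only [Finset.mem_filter, Finset.mem_univ, true_and, Finset.mem_insert]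
    constructor
    · intro h; rcases eq_or_lt_of_le h with h' | h'
      · exact Or.inl h'
      · exact Or.inr (by simp [h'])
    · rintro (rfl | h); · exact le_rfl
      · exact le_of_lt (by simpa using h)
  rw [this, Finset.sum_insert (by simp)]
  simp [hi, low, add_comm]

lemma low_nonneg {q : A → ℝ} (hq : ∀ a, 0 ≤ q a) (a : A) : 0 ≤ low q a :=
  Finset.sum_nonneg fun b _ => hq b

lemma hi_nonneg {q : A → ℝ} (hq : ∀ a, 0 ≤ q a) (a : A) : 0 ≤ hi q a :=
  add_nonneg (low_nonneg hq a) (hq a)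

lemma hi_le_one {q : A → ℝ} (hq : ∀ a, 0 ≤ q a) (hq1 : ∑ a, q a = 1) (a : A) :
    hi q a ≤ 1 := by
  rw [hi_eq, ← hq1]
  exact Finset.sum_le_sum_of_subset_of_nonneg (Finset.filter_subset _ _)
    (fun b _ _ => hq b)

lemma low_le_hi {q : A → ℝ} (hq : ∀ a, 0 ≤ q a) (a : A) : low q a ≤ hi q a := by
  simpa [hi] using hq a

noncomputable def amax : A := Finset.univ.max' Finset.univ_nonempty

lemma le_amax (a : A) : a ≤ (amax : A) := Finset.le_max' _ _ (Finset.mem_univ a)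

lemma hi_amax {q : A → ℝ} (hq1 : ∑ a, q a = 1) : hi q (amax : A) = 1 := by
  rw [hi_eq]
  rw [show Finset.univ.filter (· ≤ (amax : A)) = Finset.univ by
    ext b; simp [le_amax]]
  exact hq1

lemma hi_le_low {q : A → ℝ} (hq : ∀ a, 0 ≤ q a) {b a : A} (h : b < a) :
    hi q b ≤ low q a := by
  rw [hi_eq, low]
  refine Finset.sum_le_sum_of_subset_of_nonneg ?_ (fun c _ _ => hq c)
  intro c hc
  simp only [Finset.mem_filter, Finset.mem_univ, true_and] at hc ⊢
  exact lt_of_le_of_lt hc h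

/-- Pick the smallest letter `a` with `u ≤ ℓ + π * hi q a`. -/
noncomputable def pick (q : A → ℝ) (ℓ π u : ℝ) : A :=
  if h : (Finset.univ.filter fun a => u ≤ ℓ + π * hi q a).Nonempty then
    Finset.min' _ h else Classical.arbitrary A

lemma pick_eq {q : A → ℝ} {ℓ π u : ℝ} {a : A}
    (hmem : u ≤ ℓ + π * hi q a) (hnot : ∀ b, b < a → ¬ u ≤ ℓ + π * hi q b) :
    pick q ℓ π u = a := by
  have hne : (Finset.univ.filter fun b => u ≤ ℓ + π * hi q b).Nonempty :=
    ⟨a, by simp [hmem]⟩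
  rw [pick, dif_pos hne]
  have h1 : Finset.min' _ hne ≤ a := Finset.min'_le _ _ (by simp [hmem])
  have h2 := Finset.min'_mem _ hne
  simp only [Finset.mem_filter, Finset.mem_univ, true_and] at h2
  rcases lt_or_eq_of_le h1 with h | h
  · exact absurd h2 (hnot _ h)
  · exact h

lemma pick_spec {q : A → ℝ} (hq : ∀ a, 0 ≤ q a) (hq1 : ∑ a, q a = 1)
    {ℓ π u : ℝ} (hπ : 0 < π) (h1 : ℓ < u) (h2 : u ≤ ℓ + π) :
    u ≤ ℓ + π * hi q (pick q ℓ π u) ∧ ℓ + π * low q (pick q ℓ π u) < u := by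
  have hne : (Finset.univ.filter fun a => u ≤ ℓ + π * hi q a).Nonempty := by
    refine ⟨amax, ?_⟩
    simp [hi_amax hq1, h2]
  rw [pick, dif_pos hne]
  set a := Finset.min' _ hne with ha
  have hmem := Finset.min'_mem _ hne
  simp only [Finset.mem_filter, Finset.mem_univ, true_and, ← ha] at hmem
  refine ⟨hmem, ?_⟩
  by_contra hcon
  push_neg at hcon
  -- u ≤ ℓ + π * low q a
  by_cases hlt : (Finset.univ.filter (· < a)).Nonempty
  · set b := Finset.max' _ hlt with hb
    have hba : b < a := by
      have := Finset.max'_mem _ hlt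
      simpa [← hb] using this
    have hlow : low q a = hi q b := by
      rw [low, hi_eq]
      congr 1
      ext c
      simp only [Finset.mem_filter, Finset.mem_univ, true_and]
      constructor
      · intro h; exact Finset.le_max' _ _ (by simp [h])
      · intro h; exact lt_of_le_of_lt h hba
    have : u ≤ ℓ + π * hi q b := by rw [← hlow]; exact hcon
    have hmin : a ≤ b := Finset.min'_le _ _ (by simp [this])
    exact absurd (lt_of_le_of_lt hmin hba) (lt_irrefl a)
  · have : Finset.univ.filter (· < a) = (∅ : Finset A) :=
      Finset.not_nonempty_iff_eq_empty.mp hlt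
    have hlow : low q a = 0 := by rw [low, this, Finset.sum_empty]
    rw [hlow, mul_zero, add_zero] at hcon
    exact absurd hcon (not_le.mpr h1)

variable (p : ℕ → A → ℝ)

/-- State (left endpoint, length) after reading a word prefix. -/
noncomputable def wstate (w : ℕ → A) : ℕ → ℝ × ℝ
  | 0 => (0, 1)
  | n + 1 =>
    ((wstate w n).1 + (wstate w n).2 * low (p n) (w n), (wstate w n).2 * p n (w n))

/-- State after reading digits of `u`. -/
noncomputable def run (u : ℝ) : ℕ → ℝ × ℝ
  | 0 => (0, 1)
  | n + 1 =>
    ((run u n).1 + (run u n).2 * low (p n) (pick (p n) (run u n).1 (run u n).2 u),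
      (run u n).2 * p n (pick (p n) (run u n).1 (run u n).2 u))

/-- The digits of `u`. -/
noncomputable def dig (u : ℝ) (n : ℕ) : A := pick (p n) (run p u n).1 (run p u n).2 u

lemma run_eq_wstate (u : ℝ) (n : ℕ) : run p u n = wstate p (dig p u) n := by
  induction n with
  | zero => rfl
  | succ n ih => rw [run, wstate, ← ih, dig]

lemma wstate_congr {w w' : ℕ → A} (n : ℕ) (h : ∀ i < n, w i = w' i) :
    wstate p w n = wstate p w' n := by
  induction n with
  | zero => rfl
  | succ n ih =>
    rw [wstate, wstate, ih (fun i hi => h i (Nat.lt_succ_of_lt hi)),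
      h n (Nat.lt_succ_self n)]

lemma wstate_snd (w : ℕ → A) (n : ℕ) :
    (wstate p w n).2 = ∏ i ∈ Finset.range n, p i (w i) := by
  induction n with
  | zero => simp [wstate]
  | succ n ih => rw [wstate, Finset.prod_range_succ, ih]

variable {p}

section Props
variable (hp0 : ∀ n a, 0 ≤ p n a) (hp1 : ∀ n, ∑ a, p n a = 1)
include hp0

include hp1 in
lemma wstate_props (w : ℕ → A) (n : ℕ) :
    0 ≤ (wstate p w n).2 ∧ 0 ≤ (wstate p w n).1 ∧
      (wstate p w n).1 + (wstate p w n).2 ≤ 1 := by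
  induction n with
  | zero => norm_num [wstate]
  | succ n ih =>
    obtain ⟨h2, h1, h3⟩ := ih
    refine ⟨mul_nonneg h2 (hp0 n (w n)), add_nonneg h1 (mul_nonneg h2 (low_nonneg (hp0 n) _)), ?_⟩
    have : (wstate p w (n+1)).1 + (wstate p w (n+1)).2
        = (wstate p w n).1 + (wstate p w n).2 * hi (p n) (w n) := by
      rw [wstate]; ring_nf; rw [hi]; ring
    rw [this]
    calc (wstate p w n).1 + (wstate p w n).2 * hi (p n) (w n)
        ≤ (wstate p w n).1 + (wstate p w n).2 * 1 :=
          add_le_add_right (mul_le_mul_of_nonneg_left (hi_le_one (hp0 n) (hp1 n) _) h2) _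
      _ ≤ 1 := by rw [mul_one]; exact h3

include hp1 in
lemma wstate_nested (w : ℕ → A) (n : ℕ) :
    Set.Ioc (wstate p w (n+1)).1 ((wstate p w (n+1)).1 + (wstate p w (n+1)).2) ⊆
      Set.Ioc (wstate p w n).1 ((wstate p w n).1 + (wstate p w n).2) := by
  obtain ⟨h2, h1, h3⟩ := wstate_props hp0 hp1 w n
  apply Set.Ioc_subset_Ioc
  · rw [wstate]
    exact le_add_of_nonneg_right (mul_nonneg h2 (low_nonneg (hp0 n) _))
  · have : (wstate p w (n+1)).1 + (wstate p w (n+1)).2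
        = (wstate p w n).1 + (wstate p w n).2 * hi (p n) (w n) := by
      rw [wstate]; ring_nf; rw [hi]; ring
    rw [this]
    exact add_le_add_right (by
      calc (wstate p w n).2 * hi (p n) (w n) ≤ (wstate p w n).2 * 1 :=
        mul_le_mul_of_nonneg_left (hi_le_one (hp0 n) (hp1 n) _) h2
      _ = (wstate p w n).2 := mul_one _) _

include hp1 in
lemma run_inv {u : ℝ} (hu : u ∈ Set.Ioc (0:ℝ) 1) (n : ℕ) :
    (run p u n).1 < u ∧ u ≤ (run p u n).1 + (run p u n).2 ∧ 0 < (run p u n).2 := by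
  induction n with
  | zero => simpa [run] using hu
  | succ n ih =>
    obtain ⟨h1, h2, h3⟩ := ih
    obtain ⟨hs1, hs2⟩ := pick_spec (hp0 n) (hp1 n) h3 h1 h2
    constructor
    · rw [run]; exact hs2
    constructor
    · rw [run]
      have : (run p u n).1 + (run p u n).2 * low (p n) (pick (p n) (run p u n).1 (run p u n).2 u)
          + (run p u n).2 * p n (pick (p n) (run p u n).1 (run p u n).2 u)
          = (run p u n).1 + (run p u n).2 * hi (p n) (pick (p n) (run p u n).1 (run p u n).2 u) := by
        rw [hi]; ring
      rw [this]
      exact hs1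
    · rw [run]
      have hq : 0 < p n (pick (p n) (run p u n).1 (run p u n).2 u) := by
        by_contra hq
        push_neg at hq
        have hq0 : p n (pick (p n) (run p u n).1 (run p u n).2 u) = 0 :=
          le_antisymm hq (hp0 _ _)
        have : (run p u n).1 + (run p u n).2 * hi (p n) (pick (p n) (run p u n).1 (run p u n).2 u)
            = (run p u n).1 + (run p u n).2 * low (p n) (pick (p n) (run p u n).1 (run p u n).2 u) := by
          rw [hi, hq0]; ring
        rw [this] at hs1
        exact absurd (lt_of_le_of_lt hs1 hs2) (lt_irrefl u)
      exact mul_pos h3 hq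

include hp1 in
lemma mem_cylu_of_dig {u : ℝ} (hu : u ∈ Set.Ioc (0:ℝ) 1) (n : ℕ) :
    u ∈ Set.Ioc (wstate p (dig p u) n).1
      ((wstate p (dig p u) n).1 + (wstate p (dig p u) n).2) := by
  obtain ⟨h1, h2, _⟩ := run_inv hp0 hp1 hu n
  rw [← run_eq_wstate]
  exact ⟨h1, h2⟩

include hp1 in
lemma dig_of_mem {u : ℝ} (hu : u ∈ Set.Ioc (0:ℝ) 1) (w : ℕ → A) (n : ℕ)
    (hw : u ∈ Set.Ioc (wstate p w n).1 ((wstate p w n).1 + (wstate p w n).2)) :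
    ∀ i < n, dig p u i = w i := by
  induction n with
  | zero => intro i hi; exact absurd hi (Nat.not_lt_zero i)
  | succ n ih =>
    have hnest := wstate_nested hp0 hp1 w n hw
    have hih := ih hnest
    intro i hin
    rcases Nat.lt_succ_iff_lt_or_eq.mp hin with hi' | hEq
    · exact hih i hi'
    rw [hEq]
    -- i = n
    have hrun : run p u n = wstate p w n := by
      rw [run_eq_wstate]
      exact wstate_congr p n hih
    have hpi : 0 < (wstate p w n).2 := by
      obtain ⟨h2, _, _⟩ := wstate_props hp0 hp1 w n
      rcases lt_or_eq_of_le h2 with h | h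
      · exact h
      · exfalso
        have hz : (wstate p w (n+1)).2 = 0 := by rw [wstate]; simp [← h]
        obtain ⟨ha, hb⟩ := hw
        rw [hz, add_zero] at hb
        exact absurd (lt_of_lt_of_le ha hb) (lt_irrefl _)
    have heq1 : (wstate p w (n+1)).1 = (wstate p w n).1 + (wstate p w n).2 * low (p n) (w n) := rfl
    have heq2 : (wstate p w (n+1)).1 + (wstate p w (n+1)).2
        = (wstate p w n).1 + (wstate p w n).2 * hi (p n) (w n) := by
      rw [wstate]; ring_nf; rw [hi]; ring
    show pick (p n) (run p u n).1 (run p u n).2 u = w n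
    rw [hrun]
    apply pick_eq
    · rw [← heq2]; exact hw.2
    · intro b hb hub
      have : u ≤ (wstate p w n).1 + (wstate p w n).2 * low (p n) (w n) := by
        calc u ≤ (wstate p w n).1 + (wstate p w n).2 * hi (p n) b := hub
          _ ≤ (wstate p w n).1 + (wstate p w n).2 * low (p n) (w n) :=
            add_le_add_right (mul_le_mul_of_nonneg_left (hi_le_low (hp0 n) hb) (le_of_lt hpi)) _
      rw [← heq1] at this
      exact absurd (lt_of_lt_of_le hw.1 this) (lt_irrefl _)

include hp1 in
lemma cylu_eq (w : ℕ → A) (n : ℕ) :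
    Set.Ioc (0:ℝ) 1 ∩ {u | ∀ i < n, dig p u i = w i} =
      Set.Ioc (wstate p w n).1 ((wstate p w n).1 + (wstate p w n).2) := by
  ext u
  constructor
  · rintro ⟨hu, hd⟩
    have := mem_cylu_of_dig hp0 hp1 hu n
    rwa [wstate_congr p n (fun i hi => hd i hi)] at this
  · intro hu
    obtain ⟨h2, h1, h3⟩ := wstate_props hp0 hp1 w n
    have huIoc : u ∈ Set.Ioc (0:ℝ) 1 :=
      ⟨lt_of_le_of_lt h1 hu.1, le_trans hu.2 h3⟩
    exact ⟨huIoc, dig_of_mem hp0 hp1 huIoc w n hu⟩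

include hp1 in
lemma volume_cylu (w : ℕ → A) (n : ℕ) :
    volume (Set.Ioc (wstate p w n).1 ((wstate p w n).1 + (wstate p w n).2)) =
      ENNReal.ofReal (∏ i ∈ Finset.range n, p i (w i)) := by
  rw [Real.volume_Ioc, add_sub_cancel_left, wstate_snd]

end Props

/-! ### The measure on `ℕ → A` -/

variable [MeasurableSpace A] [MeasurableSingletonClass A]

lemma measurableSet_A (s : Set A) : MeasurableSet s := (Set.toFinite s).measurableSet

/-- Extension of a finite word to `ℕ → A`. -/
noncomputable def extw {n : ℕ} (w : Fin n → A) (i : ℕ) : A :=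
  if h : i < n then w ⟨i, h⟩ else Classical.arbitrary A

/-- Clamped digit map `ℝ → (ℕ → A)`. -/
noncomputable def mdig (p : ℕ → A → ℝ) (u : ℝ) : ℕ → A :=
  dig p (if 0 < u ∧ u ≤ 1 then u else 1)

lemma mdig_eq_dig (p : ℕ → A → ℝ) {u : ℝ} (hu : u ∈ Set.Ioc (0:ℝ) 1) :
    mdig p u = dig p u := by
  rw [mdig, if_pos ⟨hu.1, hu.2⟩]

section PropsM
variable {p : ℕ → A → ℝ} (hp0 : ∀ n a, 0 ≤ p n a) (hp1 : ∀ n, ∑ a, p n a = 1)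
include hp0 hp1

lemma dig_set_eq (n : ℕ) (a : A) :
    Set.Ioc (0:ℝ) 1 ∩ {u | dig p u n = a} =
      ⋃ (w : Fin (n+1) → A) (_ : w ⟨n, Nat.lt_succ_self n⟩ = a),
        Set.Ioc (wstate p (extw w) (n+1)).1
          ((wstate p (extw w) (n+1)).1 + (wstate p (extw w) (n+1)).2) := by
  ext u
  simp only [Set.mem_iUnion]
  constructor
  · rintro ⟨hu, hd⟩
    refine ⟨fun i => dig p u i, hd, ?_⟩
    rw [← cylu_eq hp0 hp1]
    refine ⟨hu, fun i hi => ?_⟩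
    rw [extw, dif_pos hi]
  · rintro ⟨w, hw, hmem⟩
    rw [← cylu_eq hp0 hp1] at hmem
    obtain ⟨hu, hd⟩ := hmem
    refine ⟨hu, ?_⟩
    simp only [Set.mem_setOf_eq] at hd ⊢
    have := hd n (Nat.lt_succ_self n)
    rw [extw, dif_pos (Nat.lt_succ_self n)] at this
    rw [this, hw]

lemma measurable_mdig : Measurable (mdig p) := by
  rw [measurable_pi_iff]
  intro n
  apply measurable_to_countable'
  intro a
  have : (fun u => mdig p u n) ⁻¹' {a} =
      (Set.Ioc (0:ℝ) 1 ∩ {u | dig p u n = a}) ∪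
        ((Set.Ioc (0:ℝ) 1)ᶜ ∩ {u | dig p (1:ℝ) n = a}) := by
    ext u
    simp only [Set.mem_preimage, Set.mem_singleton_iff, Set.mem_union, Set.mem_inter_iff,
      Set.mem_compl_iff, Set.mem_setOf_eq, mdig, Set.mem_Ioc]
    by_cases hu : 0 < u ∧ u ≤ 1
    · simp [hu]
    · simp [hu]
  rw [this]
  apply MeasurableSet.union
  · rw [dig_set_eq hp0 hp1]
    exact MeasurableSet.iUnion fun w => MeasurableSet.iUnion fun _ => measurableSet_Ioc
  · exact (measurableSet_Ioc.compl).inter (by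
      by_cases h : dig p (1:ℝ) n = a
      · simp only [h]; simp
      · simp only [h]; simp)

end PropsM

/-- The product measure on `ℕ → A` with marginals `p n`. -/
noncomputable def nuN (p : ℕ → A → ℝ) : Measure (ℕ → A) :=
  (volume.restrict (Set.Ioc (0:ℝ) 1)).map (mdig p)

section BoxFormula
variable {p : ℕ → A → ℝ} (hp0 : ∀ n a, 0 ≤ p n a) (hp1 : ∀ n, ∑ a, p n a = 1)
include hp0 hp1

lemma nuN_prob : IsProbabilityMeasure (nuN p) := by
  constructor
  rw [nuN, Measure.map_apply (measurable_mdig hp0 hp1) MeasurableSet.univ,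
    Set.preimage_univ, Measure.restrict_apply MeasurableSet.univ]
  simp [Real.volume_Ioc]

lemma nuN_box (F : Finset ℕ) (B : ℕ → Finset A) :
    nuN p {x : ℕ → A | ∀ i ∈ F, x i ∈ B i} =
      ∏ i ∈ F, ENNReal.ofReal (∑ a ∈ B i, p i a) := by
  classical
  set n := F.sup (· + 1) with hn
  have hFn : ∀ i ∈ F, i < n := fun i hi =>
    Nat.lt_of_lt_of_le (Nat.lt_succ_self i) (Finset.le_sup (f := (· + 1)) hi)
  have hmeas : MeasurableSet {x : ℕ → A | ∀ i ∈ F, x i ∈ B i} := by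
    have : {x : ℕ → A | ∀ i ∈ F, x i ∈ B i} = ⋂ i ∈ F, (fun x : ℕ → A => x i) ⁻¹' ↑(B i) := by
      ext x; simp
    rw [this]
    exact MeasurableSet.biInter F.countable_toSet
      (fun i _ => (measurable_pi_apply i) (measurableSet_A _))
  rw [nuN, Measure.map_apply (measurable_mdig hp0 hp1) hmeas,
    Measure.restrict_apply (hmeas.preimage (measurable_mdig hp0 hp1))]
  set W : Finset (Fin n → A) :=
    Finset.univ.filter (fun w => ∀ i ∈ F, extw w i ∈ B i) with hW
  have hset : (mdig p ⁻¹' {x : ℕ → A | ∀ i ∈ F, x i ∈ B i}) ∩ Set.Ioc (0:ℝ) 1 =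
      ⋃ w ∈ W, Set.Ioc (wstate p (extw w) n).1
        ((wstate p (extw w) n).1 + (wstate p (extw w) n).2) := by
    ext u
    simp only [Set.mem_inter_iff, Set.mem_preimage, Set.mem_setOf_eq, Set.mem_iUnion]
    constructor
    · rintro ⟨hx, hu⟩
      rw [mdig_eq_dig p hu] at hx
      refine ⟨fun i => dig p u i, ?_, ?_⟩
      · rw [hW]
        simp only [Finset.mem_filter, Finset.mem_univ, true_and]
        intro i hi
        rw [extw, dif_pos (hFn i hi)]
        exact hx i hi
      · rw [← cylu_eq hp0 hp1]
        refine ⟨hu, fun i hi => ?_⟩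
        rw [extw, dif_pos hi]
    · rintro ⟨w, hwW, hmem⟩
      rw [← cylu_eq hp0 hp1] at hmem
      obtain ⟨hu, hd⟩ := hmem
      simp only [Set.mem_setOf_eq] at hd
      refine ⟨?_, hu⟩
      rw [mdig_eq_dig p hu]
      intro i hi
      rw [hd i (hFn i hi)]
      rw [hW] at hwW
      simp only [Finset.mem_filter, Finset.mem_univ, true_and] at hwW
      exact hwW i hi
  rw [hset, measure_biUnion_finset ?_ (fun w _ => measurableSet_Ioc)]
  swap
  · intro w hw w' hw' hne
    simp only [Function.onFun]
    rw [Set.disjoint_left]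
    intro u hu hu'
    rw [← cylu_eq hp0 hp1] at hu hu'
    apply hne
    funext j
    have h1 := hu.2 j (j.isLt)
    have h2 := hu'.2 j (j.isLt)
    have e1 : extw w (j : ℕ) = w j := by rw [extw, dif_pos j.isLt]
    have e2 : extw w' (j : ℕ) = w' j := by rw [extw, dif_pos j.isLt]
    rw [← e1, ← h1, h2, e2]
  -- now sum of volumes
  have hvol : ∀ w : Fin n → A,
      volume (Set.Ioc (wstate p (extw w) n).1
        ((wstate p (extw w) n).1 + (wstate p (extw w) n).2)) =
      ENNReal.ofReal (∏ j : Fin n, p j (w j)) := by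
    intro w
    rw [volume_cylu hp0 hp1]
    congr 1
    rw [← Fin.prod_univ_eq_prod_range (fun i => p i (extw w i)) n]
    exact Finset.prod_congr rfl fun j _ => by rw [extw, dif_pos j.isLt]
  simp_rw [hvol]
  rw [← ENNReal.ofReal_sum_of_nonneg
    (fun w _ => Finset.prod_nonneg fun j _ => hp0 _ _)]
  have hWpi : W = Fintype.piFinset (fun j : Fin n =>
      if (j : ℕ) ∈ F then B (j : ℕ) else Finset.univ) := by
    ext w
    rw [hW, Fintype.mem_piFinset]
    simp only [Finset.mem_filter, Finset.mem_univ, true_and]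
    constructor
    · intro h j
      by_cases hj : (j : ℕ) ∈ F
      · rw [if_pos hj]
        have := h (j : ℕ) hj
        rwa [extw, dif_pos j.isLt, Fin.eta] at this
      · rw [if_neg hj]; exact Finset.mem_univ _
    · intro h i hi
      rw [extw, dif_pos (hFn i hi)]
      have := h ⟨i, hFn i hi⟩
      rwa [if_pos hi] at this
  have hsum : ∑ w ∈ W, ∏ j : Fin n, p j (w j) = ∏ i ∈ F, ∑ a ∈ B i, p i a := by
    rw [hWpi, ← Finset.prod_univ_sum]
    have : ∀ j : Fin n, (∑ a ∈ (if (j : ℕ) ∈ F then B (j : ℕ) else Finset.univ), p j a)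
        = if (j : ℕ) ∈ F then (∑ a ∈ B (j : ℕ), p (j : ℕ) a) else 1 := by
      intro j
      by_cases hj : (j : ℕ) ∈ F
      · rw [if_pos hj, if_pos hj]
      · rw [if_neg hj, if_neg hj]; exact hp1 _
    rw [Finset.prod_congr rfl (fun j _ => this j), ← Finset.prod_filter]
    refine Finset.prod_bij (fun (j : Fin n) _ => (j : ℕ)) ?_ ?_ ?_ ?_
    · intro j hj
      simpa using hj
    · intro j hj j' hj' h
      exact Fin.ext h
    · intro i hi
      exact ⟨⟨i, hFn i hi⟩, by simpa using hi, rfl⟩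
    · intro j hj
      rfl
  rw [hsum, ENNReal.ofReal_prod_of_nonneg
    (fun i _ => Finset.sum_nonneg fun a _ => hp0 _ _)]

end BoxFormula

/-! ### Quantile couplings on a finite linear order -/

section Quantile
variable {S : Type} [Fintype S] [LinearOrder S] [Nonempty S]
  [MeasurableSpace S] [MeasurableSingletonClass S]

lemma measure_finset_sum {α : Type*} [MeasurableSpace α] [MeasurableSingletonClass α]
    (μ : Measure α) (s : Finset α) : μ ↑s = ∑ a ∈ s, μ {a} := by
  have : (↑s : Set α) = ⋃ a ∈ s, {a} := by ext x; simp
  rw [this, measure_biUnion_finset]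
  · intro a _ b _ hab
    simp only [Function.onFun, Set.disjoint_left]
    rintro x rfl h
    exact hab (by simpa using h)
  · exact fun a _ => measurableSet_singleton a

noncomputable def Fr (μ : Measure S) (s : S) : ℝ := (μ {t | t ≤ s}).toReal

noncomputable def Gr (μ : Measure S) (s : S) : ℝ := (μ {t | t < s}).toReal

noncomputable def quant (μ : Measure S) (u : ℝ) : S :=
  if h : (Finset.univ.filter fun s => u ≤ Fr μ s).Nonempty then Finset.min' _ h
  else topS S

variable {μ : Measure S}

lemma Fr_nonneg (s : S) : 0 ≤ Fr μ s := ENNReal.toReal_nonneg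

lemma Gr_nonneg (s : S) : 0 ≤ Gr μ s := ENNReal.toReal_nonneg

lemma Fr_mono [IsProbabilityMeasure μ] {s s' : S} (h : s ≤ s') : Fr μ s ≤ Fr μ s' :=
  ENNReal.toReal_mono (measure_ne_top μ _) (measure_mono fun t ht => le_trans ht h)

lemma Gr_le_Fr [IsProbabilityMeasure μ] (s : S) : Gr μ s ≤ Fr μ s :=
  ENNReal.toReal_mono (measure_ne_top μ _) (measure_mono fun t ht => le_of_lt ht)

lemma Fr_le_one [IsProbabilityMeasure μ] (s : S) : Fr μ s ≤ 1 := by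
  rw [show (1:ℝ) = (1:ℝ≥0∞).toReal by simp]
  exact ENNReal.toReal_mono ENNReal.one_ne_top (by simpa using prob_le_one (μ := μ))

lemma Fr_topS [IsProbabilityMeasure μ] : Fr μ (topS S) = 1 := by
  rw [Fr, show {t : S | t ≤ topS S} = Set.univ from
    Set.eq_univ_of_forall fun t => Finset.le_max' _ _ (Finset.mem_univ t)]
  simp

lemma quant_filter_nonempty [IsProbabilityMeasure μ] {u : ℝ} (hu1 : u ≤ 1) :
    (Finset.univ.filter fun s => u ≤ Fr μ s).Nonempty :=
  ⟨topS S, by simp [Fr_topS, hu1]⟩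

lemma quant_le_iff [IsProbabilityMeasure μ] {u : ℝ} (hu1 : u ≤ 1) {s : S} :
    quant μ u ≤ s ↔ u ≤ Fr μ s := by
  rw [quant, dif_pos (quant_filter_nonempty hu1)]
  constructor
  · intro h
    have hm := Finset.min'_mem _ (quant_filter_nonempty (μ := μ) hu1)
    simp only [Finset.mem_filter, Finset.mem_univ, true_and] at hm
    exact le_trans hm (Fr_mono h)
  · intro h
    exact Finset.min'_le _ s (by simp [h])

lemma quant_lt_iff [IsProbabilityMeasure μ] {u : ℝ} (hu : 0 < u) (hu1 : u ≤ 1) {s : S} :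
    quant μ u < s ↔ u ≤ Gr μ s := by
  constructor
  · intro h
    have h1 : u ≤ Fr μ (quant μ u) := (quant_le_iff hu1).mp le_rfl
    refine le_trans h1 (ENNReal.toReal_mono (measure_ne_top μ _)
      (measure_mono fun t ht => lt_of_le_of_lt ht h))
  · intro h
    by_cases hne : (Finset.univ.filter (· < s)).Nonempty
    · set m := Finset.max' _ hne with hm
      have hms : m < s := by
        have := Finset.max'_mem _ hne
        simpa [← hm] using this
      have hset : {t : S | t ≤ m} = {t | t < s} := by
        ext t
        simp only [Set.mem_setOf_eq]
        constructor
        · intro ht; exact lt_of_le_of_lt ht hms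
        · intro ht; exact Finset.le_max' _ _ (by simp [ht])
      have hFr : Fr μ m = Gr μ s := by rw [Fr, Gr, hset]
      have : quant μ u ≤ m := (quant_le_iff hu1).mpr (by rw [hFr]; exact h)
      exact lt_of_le_of_lt this hms
    · exfalso
      have hempty : {t : S | t < s} = ∅ := by
        ext t
        simp only [Set.mem_setOf_eq, Set.mem_empty_iff_false, iff_false]
        intro ht
        exact hne ⟨t, by simp [ht]⟩
      rw [Gr, hempty] at h
      simp at h
      exact absurd h (not_le.mpr hu)

lemma quant_set_eq [IsProbabilityMeasure μ] (v : S) :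
    Set.Ioc (0:ℝ) 1 ∩ {u | quant μ u = v} = Set.Ioc (Gr μ v) (Fr μ v) := by
  ext u
  simp only [Set.mem_inter_iff, Set.mem_Ioc, Set.mem_setOf_eq]
  constructor
  · rintro ⟨⟨hu, hu1⟩, hq⟩
    constructor
    · by_contra hc
      push_neg at hc
      have : quant μ u < v := (quant_lt_iff hu hu1).mpr hc
      rw [hq] at this
      exact absurd this (lt_irrefl v)
    · rw [← hq]
      exact (quant_le_iff hu1).mp le_rfl
  · rintro ⟨hG, hF⟩
    have hu : 0 < u := lt_of_le_of_lt (Gr_nonneg v) hG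
    have hu1 : u ≤ 1 := le_trans hF (Fr_le_one v)
    refine ⟨⟨hu, hu1⟩, ?_⟩
    have h1 : quant μ u ≤ v := (quant_le_iff hu1).mpr hF
    have h2 : ¬ quant μ u < v := by
      rw [quant_lt_iff hu hu1]
      exact not_le.mpr hG
    exact le_antisymm h1 (not_lt.mp h2)

lemma quant_chain {ν : Measure S} [IsProbabilityMeasure μ] [IsProbabilityMeasure ν]
    (h : ∀ s, Fr ν s ≤ Fr μ s) {u : ℝ} (hu1 : u ≤ 1) :
    quant μ u ≤ quant ν u :=
  (quant_le_iff hu1).mpr (le_trans ((quant_le_iff hu1).mp le_rfl) (h _))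

end Quantile

/-! ### The monotone coupling measure on `Fin N → S` -/

section Couple
variable {S : Type} [Fintype S] [LinearOrder S] [Nonempty S]
  [MeasurableSpace S] [MeasurableSingletonClass S]
variable {N : ℕ} [NeZero N]

noncomputable def coupleMap (μs : Fin N → Measure S) (u : ℝ) : Fin N → S :=
  fun i => quant (μs i) (if 0 < u ∧ u ≤ 1 then u else 1)

noncomputable def coupleM (μs : Fin N → Measure S) : Measure (Fin N → S) :=
  (volume.restrict (Set.Ioc (0:ℝ) 1)).map (coupleMap μs)

variable {μs : Fin N → Measure S} (hprob : ∀ i, IsProbabilityMeasure (μs i))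
include hprob

lemma coupleMap_eq {u : ℝ} (hu : u ∈ Set.Ioc (0:ℝ) 1) :
    coupleMap μs u = fun i => quant (μs i) u := by
  funext i
  rw [coupleMap, if_pos ⟨hu.1, hu.2⟩]

lemma coupleMap_coord_preimage (i : Fin N) (t : S) :
    (fun u => quant (μs i) (if 0 < u ∧ u ≤ 1 then u else 1)) ⁻¹' {t} =
      (Set.Ioc (Gr (μs i) t) (Fr (μs i) t)) ∪
        ((Set.Ioc (0:ℝ) 1)ᶜ ∩ {u : ℝ | quant (μs i) 1 = t}) := by
  have := hprob i
  rw [← quant_set_eq (μ := μs i) t]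
  ext u
  simp only [Set.mem_preimage, Set.mem_singleton_iff, Set.mem_union, Set.mem_inter_iff,
    Set.mem_compl_iff, Set.mem_setOf_eq, Set.mem_Ioc]
  by_cases hu : 0 < u ∧ u ≤ 1
  · simp [hu]
  · simp [hu]

lemma measurable_coupleMap : Measurable (coupleMap μs) := by
  rw [measurable_pi_iff]
  intro i
  apply measurable_to_countable'
  intro t
  rw [show (fun u => coupleMap μs u i) = fun u => quant (μs i) (if 0 < u ∧ u ≤ 1 then u else 1)
    from rfl, coupleMap_coord_preimage hprob i t]
  refine measurableSet_Ioc.union (measurableSet_Ioc.compl.inter ?_)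
  by_cases h : quant (μs i) 1 = t
  · simp only [h]; simp
  · simp only [h]; simp

lemma coupleM_prob : IsProbabilityMeasure (coupleM μs) := by
  rw [coupleM]
  have : IsProbabilityMeasure (volume.restrict (Set.Ioc (0:ℝ) 1)) := by
    constructor
    rw [Measure.restrict_apply MeasurableSet.univ]
    simp [Real.volume_Ioc]
  exact Measure.isProbabilityMeasure_map (measurable_coupleMap hprob).aemeasurable

lemma coupleM_apply {s : Set (Fin N → S)} (hs : MeasurableSet s) :
    coupleM μs s = volume ((coupleMap μs ⁻¹' s) ∩ Set.Ioc (0:ℝ) 1) := by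
  rw [coupleM, Measure.map_apply (measurable_coupleMap hprob) hs,
    Measure.restrict_apply (hs.preimage (measurable_coupleMap hprob))]

omit hprob in
lemma ofReal_Fr_sub_Gr (μ : Measure S) [IsProbabilityMeasure μ] (t : S) :
    ENNReal.ofReal (Fr μ t - Gr μ t) = μ {t} := by
  have hsplit : μ {x | x ≤ t} = μ {x | x < t} + μ {t} := by
    rw [← measure_union ?_ (measurableSet_singleton t)]
    · congr 1
      ext x
      simp only [Set.mem_setOf_eq, Set.mem_union, Set.mem_singleton_iff]
      exact le_iff_lt_or_eq
    · rw [Set.disjoint_left]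
      rintro x hx rfl
      exact absurd hx (lt_irrefl x)
  have : Fr μ t = Gr μ t + (μ {t}).toReal := by
    rw [Fr, Gr, hsplit, ENNReal.toReal_add (measure_ne_top μ _) (measure_ne_top μ _)]
  rw [this, add_sub_cancel_left, ENNReal.ofReal_toReal (measure_ne_top μ _)]

lemma coupleM_eval (i : Fin N) (t : S) :
    coupleM μs {v | v i = t} = μs i {t} := by
  have := hprob i
  have hmeas : MeasurableSet {v : Fin N → S | v i = t} := by
    have h : {v : Fin N → S | v i = t} = (fun v : Fin N → S => v i) ⁻¹' {t} := rfl
    rw [h]; exact (measurable_pi_apply i) (measurableSet_singleton t)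
  rw [coupleM_apply hprob hmeas]
  have hset : (coupleMap μs ⁻¹' {v | v i = t}) ∩ Set.Ioc (0:ℝ) 1 =
      Set.Ioc (Gr (μs i) t) (Fr (μs i) t) := by
    rw [← quant_set_eq (μ := μs i) t]
    ext u
    simp only [Set.mem_inter_iff, Set.mem_preimage, Set.mem_setOf_eq, coupleMap]
    constructor
    · rintro ⟨hq, hu⟩
      rw [if_pos (Set.mem_Ioc.mp hu : 0 < u ∧ u ≤ 1)] at hq
      exact ⟨hu, hq⟩
    · rintro ⟨hu, hq⟩
      rw [if_pos (Set.mem_Ioc.mp hu : 0 < u ∧ u ≤ 1)]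
      exact ⟨hq, hu⟩
  rw [hset, Real.volume_Ioc, ofReal_Fr_sub_Gr]

lemma coupleM_map_eval (i : Fin N) :
    (coupleM μs).map (fun v => v i) = μs i := by
  rw [Measure.ext_iff_singleton]
  intro t
  rw [Measure.map_apply (measurable_pi_apply i) (measurableSet_singleton t)]
  exact coupleM_eval hprob i t

lemma coupleM_eval_set (i : Fin N) (B : Set S) :
    coupleM μs {v | v i ∈ B} = μs i B := by
  have := hprob i
  have h := coupleM_map_eval hprob i
  have : μs i B = (coupleM μs).map (fun v => v i) B := by rw [h]
  rw [this, Measure.map_apply (measurable_pi_apply i) ((Set.toFinite B).measurableSet)]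
  rfl

lemma coupleM_mono (hchain : ∀ i j : Fin N, i ≤ j → ∀ s, Fr (μs j) s ≤ Fr (μs i) s) :
    coupleM μs {v : Fin N → S | Monotone v} = 1 := by
  have hmeas : MeasurableSet {v : Fin N → S | Monotone v} :=
    (Set.toFinite _).measurableSet
  rw [coupleM_apply hprob hmeas]
  have hsub : Set.Ioc (0:ℝ) 1 ⊆ coupleMap μs ⁻¹' {v | Monotone v} := by
    intro u _
    simp only [Set.mem_preimage, Set.mem_setOf_eq]
    intro i j hij
    rw [coupleMap]
    set u' := if 0 < u ∧ u ≤ 1 then u else 1 with hu'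
    have hu'1 : u' ≤ 1 := by
      rw [hu']; split_ifs with h
      · exact h.2
      · exact le_rfl
    have := hprob i; have := hprob j
    exact quant_chain (hchain i j hij) hu'1
  rw [Set.inter_eq_right.mpr hsub]
  simp [Real.volume_Ioc]

end Couple

/-! ### Cylinder sets on configuration spaces -/

section Cyl
variable {ι : Type*} [Countable ι] {A : Type} [Fintype A]
  [MeasurableSpace A] [MeasurableSingletonClass A]

def cylSets (ι : Type*) (A : Type) : Set (Set (ι → A)) :=
  {s | ∃ (Λ' : Finset ι) (y : ι → A), s = {σ : ι → A | ∀ k ∈ Λ', σ k = y k}}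

lemma isPiSystem_cylSets : IsPiSystem (cylSets ι A) := by
  rintro s ⟨Λ1, y1, rfl⟩ t ⟨Λ2, y2, rfl⟩ hne
  obtain ⟨σ0, h01, h02⟩ := hne
  refine ⟨Λ1 ∪ Λ2, fun k => if k ∈ Λ1 then y1 k else y2 k, ?_⟩
  ext σ
  simp only [Set.mem_inter_iff, Set.mem_setOf_eq, Finset.mem_union]
  constructor
  · rintro ⟨hσ1, hσ2⟩ k hk
    by_cases h1 : k ∈ Λ1
    · rw [if_pos h1]; exact hσ1 k h1
    · rw [if_neg h1]
      rcases hk with h | h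
      · exact absurd h h1
      · exact hσ2 k h
  · intro h
    constructor
    · intro k hk
      have := h k (Or.inl hk)
      rwa [if_pos hk] at this
    · intro k hk
      have := h k (Or.inr hk)
      by_cases h1 : k ∈ Λ1
      · rw [if_pos h1] at this
        rw [this]
        have e1 := h01 k h1
        have e2 := h02 k hk
        rw [← e1, e2]
      · rwa [if_neg h1] at this

lemma measurableSet_cylSets {s : Set (ι → A)} (hs : s ∈ cylSets ι A) :
    MeasurableSet s := by
  obtain ⟨Λ', y, rfl⟩ := hs
  have : {σ : ι → A | ∀ k ∈ Λ', σ k = y k} =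
      ⋂ k ∈ Λ', (fun σ : ι → A => σ k) ⁻¹' {y k} := by
    ext σ; simp
  rw [this]
  exact MeasurableSet.biInter Λ'.countable_toSet
    (fun k _ => (measurable_pi_apply k) (measurableSet_singleton _))

lemma pi_eq_generateFrom_cylSets :
    (MeasurableSpace.pi : MeasurableSpace (ι → A)) =
      MeasurableSpace.generateFrom (cylSets ι A) := by
  apply le_antisymm
  · refine iSup_le fun k => ?_
    refine measurable_iff_comap_le.mp ?_
    intro t _
    have : (fun σ : ι → A => σ k) ⁻¹' t = ⋃ a ∈ t.toFinset, {σ : ι → A | σ k = a} := by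
      ext σ; simp [Set.mem_toFinset]
    rw [this]
    refine MeasurableSet.biUnion t.toFinset.countable_toSet (fun a _ => ?_)
    refine MeasurableSpace.measurableSet_generateFrom ⟨{k}, fun _ => a, ?_⟩
    ext σ; simp
  · refine MeasurableSpace.generateFrom_le fun t ht => measurableSet_cylSets ht

lemma measure_eq_of_cylSets (μ ν : Measure (ι → A)) [IsProbabilityMeasure μ]
    [IsProbabilityMeasure ν]
    (h : ∀ (Λ' : Finset ι) (y : ι → A), μ {σ | ∀ k ∈ Λ', σ k = y k} =
      ν {σ | ∀ k ∈ Λ', σ k = y k}) : μ = ν := by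
  refine ext_of_generate_finite (cylSets ι A) pi_eq_generateFrom_cylSets
    isPiSystem_cylSets ?_ (by simp)
  rintro s ⟨Λ', y, rfl⟩
  exact h Λ' y

end Cyl

/-! ### Product measure on `Config d A` from site rules -/

section ConfigMeasure
variable {d : ℕ} {A : Type} [Fintype A] [Nonempty A]
  [MeasurableSpace A] [MeasurableSingletonClass A]

/-- The product measure on `Config d A` with site marginals `ρ`. -/
noncomputable def QMeas (e : Site d ≃ ℕ) (ρ : Site d → Measure A) :
    Measure (Config d A) :=
  (nuN (fun n (j : Fin (Fintype.card A)) =>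
      (ρ (e.symm n) {(Fintype.equivFin A).symm j}).toReal)).map
    (fun x k => (Fintype.equivFin A).symm (x (e k)))

lemma measurable_relabel (e : Site d ≃ ℕ) :
    Measurable (fun (x : ℕ → Fin (Fintype.card A)) (k : Site d) =>
      (Fintype.equivFin A).symm (x (e k))) :=
  measurable_pi_lambda _ fun k => by
    have h1 : Measurable ((Fintype.equivFin A).symm) := fun _ _ => (Set.toFinite _).measurableSet
    exact h1.comp (measurable_pi_apply (e k))

variable (e : Site d ≃ ℕ) {ρ : Site d → Measure A}
  (hρ : ∀ k, IsProbabilityMeasure (ρ k))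
include hρ

lemma QMeas_p0 : ∀ (n : ℕ) (j : Fin (Fintype.card A)),
    0 ≤ (ρ (e.symm n) {(Fintype.equivFin A).symm j}).toReal :=
  fun _ _ => ENNReal.toReal_nonneg

lemma QMeas_p1 : ∀ n : ℕ,
    ∑ j : Fin (Fintype.card A), (ρ (e.symm n) {(Fintype.equivFin A).symm j}).toReal = 1 := by
  intro n
  have := hρ (e.symm n)
  rw [Fintype.sum_equiv (Fintype.equivFin A).symm _
    (fun a => (ρ (e.symm n) {a}).toReal) (fun j => rfl)]
  have hsum : ∑ a : A, ρ (e.symm n) {a} = 1 := by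
    rw [← measure_finset_sum (ρ (e.symm n)) Finset.univ]
    simp
  rw [← ENNReal.toReal_sum (fun a _ => measure_ne_top _ _), hsum, ENNReal.toReal_one]

lemma QMeas_prob : IsProbabilityMeasure (QMeas e ρ) := by
  rw [QMeas]
  haveI := nuN_prob (QMeas_p0 e hρ) (QMeas_p1 e hρ)
  exact Measure.isProbabilityMeasure_map (measurable_relabel e).aemeasurable

omit hρ in
lemma measurableSet_box (Λ' : Finset (Site d)) (B : Site d → Finset A) :
    MeasurableSet {σ : Config d A | ∀ k ∈ Λ', σ k ∈ B k} := by
  have : {σ : Config d A | ∀ k ∈ Λ', σ k ∈ B k} =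
      ⋂ k ∈ Λ', (fun σ : Config d A => σ k) ⁻¹' ↑(B k) := by
    ext σ; simp
  rw [this]
  exact MeasurableSet.biInter Λ'.countable_toSet
    (fun k _ => (measurable_pi_apply k) ((Set.toFinite _).measurableSet))

lemma QMeas_box (Λ' : Finset (Site d)) (B : Site d → Finset A) :
    QMeas e ρ {σ : Config d A | ∀ k ∈ Λ', σ k ∈ B k} = ∏ k ∈ Λ', ρ k ↑(B k) := by
  classical
  set c := Fintype.equivFin A with hc
  set p := fun n (j : Fin (Fintype.card A)) => (ρ (e.symm n) {c.symm j}).toReal with hp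
  rw [QMeas, Measure.map_apply (measurable_relabel e) (measurableSet_box Λ' B)]
  have hpre : (fun (x : ℕ → Fin (Fintype.card A)) (k : Site d) => c.symm (x (e k))) ⁻¹'
      {σ : Config d A | ∀ k ∈ Λ', σ k ∈ B k} =
      {x : ℕ → Fin (Fintype.card A) | ∀ n ∈ Λ'.image e, x n ∈ (B (e.symm n)).image c} := by
    ext x
    simp only [Set.mem_preimage, Set.mem_setOf_eq, Finset.mem_image]
    constructor
    · rintro h n ⟨k, hk, rfl⟩
      refine ⟨c.symm (x (e k)), ?_, by simp⟩
      rw [Equiv.symm_apply_apply]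
      exact h k hk
    · intro h k hk
      obtain ⟨a, ha, hax⟩ := h (e k) ⟨k, hk, rfl⟩
      rw [Equiv.symm_apply_apply] at ha
      rw [← hax, Equiv.symm_apply_apply]
      exact ha
  rw [hpre, nuN_box (QMeas_p0 e hρ) (QMeas_p1 e hρ)]
  rw [Finset.prod_image (fun k _ k' _ h => e.injective h)]
  refine Finset.prod_congr rfl fun k _ => ?_
  have := hρ k
  simp only [Equiv.symm_apply_apply]
  rw [Finset.sum_image (fun a _ a' _ h => c.injective h)]
  simp only [← hc, Equiv.symm_apply_apply]
  rw [← ENNReal.toReal_sum (fun a _ => measure_ne_top _ _),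
    ← measure_finset_sum (ρ k) (B k), ENNReal.ofReal_toReal (measure_ne_top _ _)]

lemma QMeas_cyl (Λ' : Finset (Site d)) (y : Site d → A) :
    QMeas e ρ {σ : Config d A | ∀ k ∈ Λ', σ k = y k} = ∏ k ∈ Λ', ρ k {y k} := by
  have h1 : {σ : Config d A | ∀ k ∈ Λ', σ k = y k} =
      {σ : Config d A | ∀ k ∈ Λ', σ k ∈ ({y k} : Finset A)} := by
    ext σ; simp
  rw [h1, QMeas_box e hρ]
  exact Finset.prod_congr rfl fun k _ => by simp

end ConfigMeasure

/-! ### Miscellaneous helpers -/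

section Helpers

lemma measurable_finset_inf' {ι X : Type*} [MeasurableSpace X] (s : Finset ι)
    (hs : s.Nonempty) (f : ι → X → ℝ) (hf : ∀ i, Measurable (f i)) :
    Measurable fun x => s.inf' hs fun i => f i x := by
  induction hs using Finset.Nonempty.cons_induction with
  | singleton a =>
    have h1 : (fun x => ({a} : Finset ι).inf' (Finset.singleton_nonempty a) fun i => f i x) = f a := by
      funext x; exact Finset.inf'_singleton (f := fun i => f i x) (b := a)
    rw [h1]; exact hf a
  | cons a s h hs ih =>
    have h1 : (fun x => (Finset.cons a s h).inf' (Finset.cons_nonempty h) fun i => f i x)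
        = fun x => (f a x) ⊓ (s.inf' hs fun i => f i x) := by
      funext x; exact Finset.inf'_cons hs _
    rw [h1]; exact (hf a).inf ih

lemma measurable_finset_sup' {ι X : Type*} [MeasurableSpace X] (s : Finset ι)
    (hs : s.Nonempty) (f : ι → X → ℝ) (hf : ∀ i, Measurable (f i)) :
    Measurable fun x => s.sup' hs fun i => f i x := by
  induction hs using Finset.Nonempty.cons_induction with
  | singleton a =>
    have h1 : (fun x => ({a} : Finset ι).sup' (Finset.singleton_nonempty a) fun i => f i x) = f a := by
      funext x; exact Finset.sup'_singleton (f := fun i => f i x) (b := a)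
    rw [h1]; exact hf a
  | cons a s h hs ih =>
    have h1 : (fun x => (Finset.cons a s h).sup' (Finset.cons_nonempty h) fun i => f i x)
        = fun x => (f a x) ⊔ (s.sup' hs fun i => f i x) := by
      funext x; exact Finset.sup'_cons hs _
    rw [h1]; exact (hf a).sup ih

variable {d : ℕ} {S : Type} [Fintype S] [MeasurableSpace S] [MeasurableSingletonClass S]

lemma kernel_eval (W : PCA d S) (k : Site d) (η : Config d S) (s0 : Set S) :
    W.toKernel η {σ : Config d S | σ k ∈ s0} = W.rule k η s0 := by
  classical
  have h1 : {σ : Config d S | σ k ∈ s0} = ⋃ t ∈ s0.toFinset, {σ : Config d S | σ k = t} := by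
    ext σ; simp [Set.mem_toFinset]
  have h2 : ∀ t : S, W.toKernel η {σ : Config d S | σ k = t} = W.rule k η {t} := by
    intro t
    have h3 : {σ : Config d S | σ k = t} =
        {σ : Config d S | ∀ k' ∈ ({k} : Finset (Site d)), σ k' = (fun _ => t) k'} := by
      ext σ; simp
    rw [h3, W.product η {k} (fun _ => t), Finset.prod_singleton]
  rw [h1, measure_biUnion_finset ?_ ?_]
  · rw [show s0 = ↑s0.toFinset by simp, measure_finset_sum]
    · refine Finset.sum_congr (by simp) fun t ht => h2 t
  · intro t _ t' _ htt'
    simp only [Function.onFun, Set.disjoint_left, Set.mem_setOf_eq]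
    rintro σ h1 h2
    exact htt' (h1 ▸ h2)
  · intro t _
    have : {σ : Config d S | σ k = t} = (fun σ : Config d S => σ k) ⁻¹' {t} := rfl
    rw [this]
    exact (measurable_pi_apply k) (measurableSet_singleton t)

end Helpers

/-! ### Singleton formula for the coupling -/

section CoupleSingleton
variable {S : Type} [Fintype S] [LinearOrder S] [Nonempty S]
  [MeasurableSpace S] [MeasurableSingletonClass S]
variable {N : ℕ} [NeZero N]

lemma iInter_Ioc (a b : Fin N → ℝ) :
    ⋂ i, Set.Ioc (a i) (b i) =
      Set.Ioc (Finset.univ.sup' Finset.univ_nonempty a) (Finset.univ.inf' Finset.univ_nonempty b) := by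
  ext u
  simp only [Set.mem_iInter, Set.mem_Ioc, Finset.sup'_lt_iff, Finset.le_inf'_iff]
  constructor
  · intro h
    exact ⟨fun i _ => (h i).1, fun i _ => (h i).2⟩
  · intro ⟨h1, h2⟩ i
    exact ⟨h1 i (Finset.mem_univ i), h2 i (Finset.mem_univ i)⟩

lemma coupleM_singleton {μs : Fin N → Measure S} (hprob : ∀ i, IsProbabilityMeasure (μs i))
    (v : Fin N → S) :
    coupleM μs {v} = ENNReal.ofReal
      ((Finset.univ.inf' Finset.univ_nonempty fun i => Fr (μs i) (v i)) -
        (Finset.univ.sup' Finset.univ_nonempty fun i => Gr (μs i) (v i))) := by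
  rw [coupleM_apply hprob (measurableSet_singleton v)]
  have hset : (coupleMap μs ⁻¹' {v}) ∩ Set.Ioc (0:ℝ) 1 =
      ⋂ i, Set.Ioc (Gr (μs i) (v i)) (Fr (μs i) (v i)) := by
    ext u
    simp only [Set.mem_inter_iff, Set.mem_preimage, Set.mem_singleton_iff, Set.mem_iInter]
    constructor
    · rintro ⟨hv, hu⟩
      intro i
      have := hprob i
      rw [← quant_set_eq (μ := μs i) (v i)]
      refine ⟨hu, ?_⟩
      have := congrFun hv i
      rwa [coupleMap, if_pos (Set.mem_Ioc.mp hu : 0 < u ∧ u ≤ 1)] at this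
    · intro h
      have hu : u ∈ Set.Ioc (0:ℝ) 1 := by
        have := hprob ⟨0, Nat.pos_of_ne_zero (NeZero.ne N)⟩
        have h0 := h ⟨0, Nat.pos_of_ne_zero (NeZero.ne N)⟩
        rw [← quant_set_eq (μ := μs _)] at h0
        exact h0.1
      refine ⟨?_, hu⟩
      funext i
      have := hprob i
      have hi := h i
      rw [← quant_set_eq (μ := μs i)] at hi
      rw [coupleMap, if_pos (Set.mem_Ioc.mp hu : 0 < u ∧ u ≤ 1)]
      exact hi.2
  rw [hset, iInter_Ioc, Real.volume_Ioc]

end CoupleSingleton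

/-! ### The synchronous coupling PCA -/

section SyncPCA
variable {d N : ℕ} {S : Type} [Fintype S] [LinearOrder S] [Nonempty S]
  [MeasurableSpace S] [MeasurableSingletonClass S] [NeZero N]

/-- The tuple of site marginal measures. -/
noncomputable def siteMu (T : Fin N → PCA d S) (k : Site d)
    (ω : Config d (Fin N → S)) : Fin N → Measure S :=
  fun i => (T i).rule k (fun x => ω x i)

/-- The coupled updating rule at a site. -/
noncomputable def siteRho (T : Fin N → PCA d S) (k : Site d)
    (ω : Config d (Fin N → S)) : Measure (Fin N → S) :=
  coupleM (siteMu T k ω)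

/-- The coupled transition measure. -/
noncomputable def QFun (e : Site d ≃ ℕ) (T : Fin N → PCA d S)
    (ω : Config d (Fin N → S)) : Measure (Config d (Fin N → S)) :=
  QMeas e (fun k => siteRho T k ω)

variable (T : Fin N → PCA d S) (e : Site d ≃ ℕ)

lemma siteMu_prob (k : Site d) (ω : Config d (Fin N → S)) (i : Fin N) :
    IsProbabilityMeasure (siteMu T k ω i) := (T i).rule_prob _ _

lemma siteRho_prob (k : Site d) (ω : Config d (Fin N → S)) :
    IsProbabilityMeasure (siteRho T k ω) := coupleM_prob (siteMu_prob T k ω)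

lemma QFun_prob (ω : Config d (Fin N → S)) : IsProbabilityMeasure (QFun e T ω) :=
  QMeas_prob e (fun k => siteRho_prob T k ω)

lemma QFun_box (ω : Config d (Fin N → S)) (Λ' : Finset (Site d))
    (B : Site d → Finset (Fin N → S)) :
    QFun e T ω {σ | ∀ k ∈ Λ', σ k ∈ B k} = ∏ k ∈ Λ', siteRho T k ω ↑(B k) :=
  QMeas_box e (fun k => siteRho_prob T k ω) Λ' B

lemma QFun_cyl (ω : Config d (Fin N → S)) (Λ' : Finset (Site d)) (y : Site d → Fin N → S) :
    QFun e T ω {σ | ∀ k ∈ Λ', σ k = y k} = ∏ k ∈ Λ', siteRho T k ω {y k} :=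
  QMeas_cyl e (fun k => siteRho_prob T k ω) Λ' y

lemma measurable_layer (i : Fin N) :
    Measurable (fun ω : Config d (Fin N → S) => (fun x => ω x i)) :=
  measurable_pi_lambda _ fun x => (measurable_pi_apply i).comp (measurable_pi_apply x)

lemma measurable_Fr (k : Site d) (i : Fin N) (s : S) :
    Measurable fun ω : Config d (Fin N → S) => Fr (siteMu T k ω i) s := by
  have h1 : ∀ ω : Config d (Fin N → S), Fr (siteMu T k ω i) s =
      ((T i).toKernel (fun x => ω x i) {σ : Config d S | σ k ∈ {t | t ≤ s}}).toReal := by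
    intro ω
    rw [kernel_eval]
    rfl
  simp_rw [h1]
  refine Measurable.ennreal_toReal ?_
  exact (Kernel.measurable_coe _ ((measurable_pi_apply k)
    ((Set.toFinite _).measurableSet))).comp (measurable_layer i)

lemma measurable_Gr (k : Site d) (i : Fin N) (s : S) :
    Measurable fun ω : Config d (Fin N → S) => Gr (siteMu T k ω i) s := by
  have h1 : ∀ ω : Config d (Fin N → S), Gr (siteMu T k ω i) s =
      ((T i).toKernel (fun x => ω x i) {σ : Config d S | σ k ∈ {t | t < s}}).toReal := by
    intro ω
    rw [kernel_eval]
    rfl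
  simp_rw [h1]
  refine Measurable.ennreal_toReal ?_
  exact (Kernel.measurable_coe _ ((measurable_pi_apply k)
    ((Set.toFinite _).measurableSet))).comp (measurable_layer i)

lemma measurable_rho_atom (k : Site d) (v : Fin N → S) :
    Measurable fun ω : Config d (Fin N → S) => siteRho T k ω {v} := by
  have h1 : ∀ ω : Config d (Fin N → S), siteRho T k ω {v} = ENNReal.ofReal
      ((Finset.univ.inf' Finset.univ_nonempty fun i => Fr (siteMu T k ω i) (v i)) -
        (Finset.univ.sup' Finset.univ_nonempty fun i => Gr (siteMu T k ω i) (v i))) :=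
    fun ω => coupleM_singleton (siteMu_prob T k ω) v
  simp_rw [h1]
  exact ENNReal.measurable_ofReal.comp
    ((measurable_finset_inf' _ _ _ (fun i => measurable_Fr T k i (v i))).sub
      (measurable_finset_sup' _ _ _ (fun i => measurable_Gr T k i (v i))))

lemma measurable_QFun : Measurable (QFun e T) := by
  refine Measure.measurable_of_measurable_coe _ fun s hs => ?_
  refine MeasurableSpace.induction_on_inter
    (C := fun s _ => Measurable fun ω => QFun e T ω s)
    (s := cylSets (Site d) (Fin N → S)) pi_eq_generateFrom_cylSets isPiSystem_cylSets
    ?_ ?_ ?_ ?_ s hs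
  · simp only [measure_empty]; exact measurable_const
  · rintro t ⟨Λ', y, rfl⟩
    simp_rw [QFun_cyl T e]
    exact Finset.measurable_prod _ fun k _ => measurable_rho_atom T k (y k)
  · intro t ht ih
    have hc : ∀ ω, QFun e T ω tᶜ = 1 - QFun e T ω t := by
      intro ω
      haveI := QFun_prob T e ω
      rw [measure_compl ht (measure_ne_top _ _), measure_univ]
    simp_rw [hc]
    exact Measurable.const_sub ih _
  · intro g hdisj hmeas ih
    simp_rw [measure_iUnion hdisj hmeas]
    exact Measurable.ennreal_tsum ih

/-- The synchronous coupling PCA. -/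
noncomputable def QPCA : PCA d (Fin N → S) where
  rule := fun k ω => siteRho T k ω
  rule_prob := fun k ω => siteRho_prob T k ω
  rule_local := by
    intro k
    classical
    refine ⟨Finset.univ.biUnion (fun i : Fin N => ((T i).rule_local k).choose), ?_⟩
    intro ω ω' hagree
    show coupleM (siteMu T k ω) = coupleM (siteMu T k ω')
    have : siteMu T k ω = siteMu T k ω' := by
      funext i
      refine ((T i).rule_local k).choose_spec _ _ fun j hj => ?_
      have : ω j = ω' j := hagree j (Finset.mem_biUnion.mpr ⟨i, Finset.mem_univ i, hj⟩)
      rw [this]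
    rw [this]
  toKernel := ⟨QFun e T, measurable_QFun T e⟩
  markov := ⟨fun ω => QFun_prob T e ω⟩
  product := fun ω Λ' y => QFun_cyl T e ω Λ' y

lemma QPCA_marginal (k : Site d) (ζ : Fin N → Config d S) (i : Fin N) :
    (((QPCA T e).rule k fun x j => ζ j x).map fun v => v i) = (T i).rule k (ζ i) := by
  have h := coupleM_map_eval (μs := siteMu T k (fun x j => ζ j x))
    (siteMu_prob T k _) i
  exact h

end SyncPCA

/-! ### Attractiveness and CDF comparison -/

section Attract
variable {d : ℕ} {S : Type} [Fintype S] [LinearOrder S] [Nonempty S]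
  [MeasurableSpace S] [MeasurableSingletonClass S]

lemma Fr_eq_one_sub {μ : Measure S} [IsProbabilityMeasure μ] (s : S) :
    Fr μ s = 1 - (μ {t | ¬ t ≤ s}).toReal := by
  have h1 : {t : S | ¬ t ≤ s} = {t : S | t ≤ s}ᶜ := rfl
  rw [h1, measure_compl ((Set.toFinite _).measurableSet) (measure_ne_top _ _), measure_univ,
    ENNReal.toReal_sub_of_le prob_le_one ENNReal.one_ne_top, ENNReal.toReal_one]
  rw [Fr]
  ring

lemma attract_Fr {P : PCA d S} (hA : Attractive P) {η η' : Config d S} (h : η ≤ η')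
    (k : Site d) (s : S) : Fr (P.rule k η') s ≤ Fr (P.rule k η) s := by
  set U : Set (Config d S) := {σ | σ k ∈ {t : S | ¬ t ≤ s}} with hU
  have hUmeas : MeasurableSet U := (measurable_pi_apply k) ((Set.toFinite _).measurableSet)
  have hfm : Measurable (U.indicator (1 : Config d S → ℝ)) :=
    measurable_one.indicator hUmeas
  have hfmono : Monotone (U.indicator (1 : Config d S → ℝ)) := by
    intro σ σ' hσ
    by_cases hσU : σ ∈ U
    · have hσ'U : σ' ∈ U := by
        simp only [hU, Set.mem_setOf_eq] at hσU ⊢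
        intro hle
        exact hσU (le_trans (hσ k) hle)
      rw [Set.indicator_of_mem hσU, Set.indicator_of_mem hσ'U]
      exact le_rfl
    · rw [Set.indicator_of_notMem hσU]
      exact Set.indicator_nonneg (fun _ _ => zero_le_one) σ'
  have hbdd : ∃ C, ∀ x, |U.indicator (1 : Config d S → ℝ) x| ≤ C := by
    refine ⟨1, fun x => ?_⟩
    by_cases hx : x ∈ U
    · rw [Set.indicator_of_mem hx]; simp
    · rw [Set.indicator_of_notMem hx]; simp
  have hkey := hA _ hfm hfmono hbdd h
  dsimp only at hkey
  rw [integral_indicator_one hUmeas, integral_indicator_one hUmeas] at hkey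
  rw [hU] at hkey
  rw [measureReal_def, measureReal_def, kernel_eval, kernel_eval] at hkey
  haveI := P.rule_prob k η
  haveI := P.rule_prob k η'
  rw [Fr_eq_one_sub, Fr_eq_one_sub]
  linarith

lemma Fr_dirac_bot (s : S) : Fr (Measure.dirac (botS S)) s = 1 := by
  rw [Fr, Measure.dirac_apply' _ ((Set.toFinite _).measurableSet),
    Set.indicator_of_mem (by
      simp only [Set.mem_setOf_eq]
      exact Finset.min'_le _ _ (Finset.mem_univ s))]
  simp

lemma Fr_dirac_top_le (μ : Measure S) [IsProbabilityMeasure μ] (s : S) :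
    Fr (Measure.dirac (topS S)) s ≤ Fr μ s := by
  by_cases htop : topS S ≤ s
  · have huniv : {t : S | t ≤ s} = Set.univ :=
      Set.eq_univ_of_forall fun t => le_trans (Finset.le_max' _ _ (Finset.mem_univ t)) htop
    have h2 : Fr μ s = 1 := by rw [Fr, huniv]; simp
    rw [h2]
    exact Fr_le_one (μ := Measure.dirac (topS S)) s
  · rw [Fr, Measure.dirac_apply' _ ((Set.toFinite _).measurableSet),
      Set.indicator_of_notMem (by simpa using htop)]
    simpa using Fr_nonneg (μ := μ) s

end Attract

end Stmt13Aux

/-- For an attractive PCA `P`, the tuple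
`(P_Λ^-, P, …, P, P_Λ^+)` is increasing and admits an increasing synchronous coupling. -/
theorem stmt13 {d N : ℕ} (hd : 1 ≤ d) (hN : 2 ≤ N)
    {S : Type} [Fintype S] [LinearOrder S] [Nonempty S]
    [MeasurableSpace S] [MeasurableSingletonClass S]
    (P Pm Pp : PCA d S) (hA : Attractive P) (Λ : Finset (Site d))
    (hPm : ∀ k η, Pm.rule k η = fvRule P Λ (fun _ => botS S) k η)
    (hPp : ∀ k η, Pp.rule k η = fvRule P Λ (fun _ => topS S) k η)
    (T : Fin N → PCA d S)
    (hT : T = fun i : Fin N => if (i : ℕ) = 0 then Pm else if (i : ℕ) = N - 1 then Pp else P) :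
    IncreasingTuple T ∧ ∃ C : SyncCoupling T, C.Increasing := by
  classical
  haveI : NeZero N := ⟨by omega⟩
  haveI : NeZero d := ⟨by omega⟩
  obtain ⟨den⟩ := nonempty_denumerable (Site d)
  let e : Site d ≃ ℕ := @Denumerable.eqv (Site d) den
  -- extreme elements
  have hbot : ∀ t : S, botS S ≤ t := fun t => Finset.min'_le _ _ (Finset.mem_univ t)
  -- the CDF chain inequality
  have hchain : ∀ (ζ : Fin N → Config d S), Monotone ζ → ∀ (k : Site d) (i j : Fin N),
      i ≤ j → ∀ s : S,
      Stmt13Aux.Fr ((T j).rule k (ζ j)) s ≤ Stmt13Aux.Fr ((T i).rule k (ζ i)) s := by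
    intro ζ hζ k i j hij s
    rcases eq_or_lt_of_le hij with rfl | hlt
    · exact le_rfl
    have hij' : (i : ℕ) < (j : ℕ) := hlt
    have hjne0 : ¬ (j : ℕ) = 0 := by omega
    have hine : ¬ (i : ℕ) = N - 1 := by have := j.isLt; omega
    have hζij : ζ i ≤ ζ j := hζ (le_of_lt hlt)
    have hN10 : ¬ (N - 1 = 0) := by omega
    have hb1 : (fun x => if x ∈ Λ then ζ i x else botS S) ≤ ζ j := by
      intro x
      by_cases hx : x ∈ Λ
      · simpa [hx] using hζij x
      · simpa [hx] using hbot (ζ j x)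
    have ht1 : ζ i ≤ (fun x => if x ∈ Λ then ζ j x else topS S) := by
      intro x
      by_cases hx : x ∈ Λ
      · simpa [hx] using hζij x
      · simp only [hx, if_false]; exact Finset.le_max' _ _ (Finset.mem_univ (ζ i x))
    have hbt : (fun x => if x ∈ Λ then ζ i x else botS S) ≤
        (fun x => if x ∈ Λ then ζ j x else topS S) := by
      intro x
      by_cases hx : x ∈ Λ
      · simpa [hx] using hζij x
      · simp only [hx, if_false]; exact Finset.le_max' _ _ (Finset.mem_univ (botS S))
    by_cases h0 : (i : ℕ) = 0
    · have hTi' : T i = Pm := by rw [hT]; simp [h0]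
      by_cases hN1 : (j : ℕ) = N - 1
      · have hTj' : T j = Pp := by rw [hT]; simp [hjne0, hN1, hN10]
        rw [hTi', hTj', hPm, hPp, fvRule, fvRule]
        by_cases hk : k ∈ Λ
        · rw [if_pos hk, if_pos hk]
          exact Stmt13Aux.attract_Fr hA hbt k s
        · rw [if_neg hk, if_neg hk]
          haveI : IsProbabilityMeasure (Measure.dirac (botS S)) := inferInstance
          have h1 := Stmt13Aux.Fr_dirac_top_le (Measure.dirac (botS S)) s
          exact h1
      · have hTj' : T j = P := by rw [hT]; simp [hjne0, hN1]
        rw [hTi', hTj', hPm, fvRule]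
        by_cases hk : k ∈ Λ
        · rw [if_pos hk]
          exact Stmt13Aux.attract_Fr hA hb1 k s
        · rw [if_neg hk]
          rw [Stmt13Aux.Fr_dirac_bot]
          haveI := P.rule_prob k (ζ j)
          exact Stmt13Aux.Fr_le_one s
    · have hTi' : T i = P := by rw [hT]; simp [h0, hine]
      by_cases hN1 : (j : ℕ) = N - 1
      · have hTj' : T j = Pp := by rw [hT]; simp [hjne0, hN1, hN10]
        rw [hTi', hTj', hPp, fvRule]
        by_cases hk : k ∈ Λ
        · rw [if_pos hk]
          exact Stmt13Aux.attract_Fr hA ht1 k s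
        · rw [if_neg hk]
          haveI := P.rule_prob k (ζ i)
          exact Stmt13Aux.Fr_dirac_top_le _ s
      · have hTj' : T j = P := by rw [hT]; simp [hjne0, hN1]
        rw [hTi', hTj']
        exact Stmt13Aux.attract_Fr hA hζij k s
  -- measurability of the monotone event
  have hMeasMono : MeasurableSet {ω : Config d (Fin N → S) | ∀ x, Monotone (ω x)} := by
    have h1 : {ω : Config d (Fin N → S) | ∀ x, Monotone (ω x)} =
        ⋂ x, (fun ω : Config d (Fin N → S) => ω x) ⁻¹' {v | Monotone v} := by
      ext ω; simp
    rw [h1]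
    exact MeasurableSet.iInter fun x =>
      (measurable_pi_apply x) ((Set.toFinite _).measurableSet)
  -- the coupled kernel gives full mass to ordered configurations
  have hQmono : ∀ (ζ : Fin N → Config d S), Monotone ζ →
      Stmt13Aux.QFun e T (fun x j => ζ j x)
        {ω : Config d (Fin N → S) | ∀ x, Monotone (ω x)} = 1 := by
    intro ζ hζ
    haveI := Stmt13Aux.QFun_prob T e (fun x j => ζ j x)
    rw [← prob_compl_eq_zero_iff hMeasMono]
    have hcompl : {ω : Config d (Fin N → S) | ∀ x, Monotone (ω x)}ᶜ =
        ⋃ x, {ω : Config d (Fin N → S) | ¬ Monotone (ω x)} := by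
      ext ω; simp [not_forall]
    rw [hcompl]
    refine measure_iUnion_null fun x => ?_
    have hbox : {ω : Config d (Fin N → S) | ¬ Monotone (ω x)} =
        {σ : Config d (Fin N → S) | ∀ k ∈ ({x} : Finset (Site d)),
          σ k ∈ Finset.univ.filter (fun v : Fin N → S => ¬ Monotone v)} := by
      ext σ; simp
    rw [hbox, Stmt13Aux.QFun_box, Finset.prod_singleton]
    have hcoe : (↑(Finset.univ.filter (fun v : Fin N → S => ¬ Monotone v)) :
        Set (Fin N → S)) = {v : Fin N → S | Monotone v}ᶜ := by
      ext v; simp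
    rw [hcoe]
    haveI := Stmt13Aux.siteRho_prob T x (fun x j => ζ j x)
    have hR : Stmt13Aux.siteRho T x (fun x j => ζ j x)
        {v : Fin N → S | Monotone v}ᶜ = 0 := by
      rw [prob_compl_eq_zero_iff ((Set.toFinite _).measurableSet)]
      exact Stmt13Aux.coupleM_mono (Stmt13Aux.siteMu_prob T x _)
        (fun i j hij s => hchain ζ hζ x i j hij s)
    exact hR
  -- identification of the layer marginals
  have hlayer : ∀ (ζ : Fin N → Config d S) (i : Fin N),
      (Stmt13Aux.QFun e T (fun x j => ζ j x)).map (fun ω x => ω x i) =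
        (T i).toKernel (ζ i) := by
    intro ζ i
    haveI := Stmt13Aux.QFun_prob T e (fun x j => ζ j x)
    haveI : IsProbabilityMeasure ((Stmt13Aux.QFun e T (fun x j => ζ j x)).map
        (fun ω x => ω x i)) :=
      Measure.isProbabilityMeasure_map (Stmt13Aux.measurable_layer i).aemeasurable
    haveI := (T i).markov
    refine Stmt13Aux.measure_eq_of_cylSets _ _ fun Λ' y => ?_
    rw [Measure.map_apply (Stmt13Aux.measurable_layer i)
      (Stmt13Aux.measurableSet_cylSets ⟨Λ', y, rfl⟩)]
    have hpre : (fun (ω : Config d (Fin N → S)) x => ω x i) ⁻¹'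
        {σ : Config d S | ∀ k ∈ Λ', σ k = y k} =
        {σ : Config d (Fin N → S) | ∀ k ∈ Λ',
          σ k ∈ Finset.univ.filter (fun v : Fin N → S => v i = y k)} := by
      ext ω; simp
    rw [hpre, Stmt13Aux.QFun_box, (T i).product]
    refine Finset.prod_congr rfl fun k _ => ?_
    have hcoe : (↑(Finset.univ.filter (fun v : Fin N → S => v i = y k)) :
        Set (Fin N → S)) = {v : Fin N → S | v i = y k} := by
      ext v; simp
    rw [hcoe]
    exact Stmt13Aux.coupleM_eval (Stmt13Aux.siteMu_prob T k _) i (y k)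
  constructor
  · -- IncreasingTuple
    intro ζ hζ i j hij f hfm hfmono hbdd
    obtain ⟨C, hC⟩ := hbdd
    haveI := Stmt13Aux.QFun_prob T e (fun x j' => ζ j' x)
    have hae1 : ∀ᵐ ω ∂(Stmt13Aux.QFun e T (fun x j' => ζ j' x)), ∀ x, Monotone (ω x) := by
      rw [ae_iff]
      have h1 : {ω : Config d (Fin N → S) | ¬ ∀ x, Monotone (ω x)} =
          {ω : Config d (Fin N → S) | ∀ x, Monotone (ω x)}ᶜ := rfl
      rw [h1, prob_compl_eq_zero_iff hMeasMono]
      exact hQmono ζ hζ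
    have hint : ∀ i' : Fin N, Integrable (fun ω : Config d (Fin N → S) =>
        f (fun x => ω x i')) (Stmt13Aux.QFun e T (fun x j' => ζ j' x)) := by
      intro i'
      refine ⟨(hfm.comp (Stmt13Aux.measurable_layer i')).aestronglyMeasurable, ?_⟩
      refine MeasureTheory.HasFiniteIntegral.of_bounded (C := C) ?_
      exact Filter.Eventually.of_forall fun ω => by
        rw [Real.norm_eq_abs]; exact hC _
    rw [← hlayer ζ i, ← hlayer ζ j,
      integral_map (Stmt13Aux.measurable_layer i).aemeasurable
        hfm.aestronglyMeasurable,
      integral_map (Stmt13Aux.measurable_layer j).aemeasurable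
        hfm.aestronglyMeasurable]
    refine integral_mono_ae (hint i) (hint j) ?_
    filter_upwards [hae1] with ω hω
    exact hfmono fun x => hω x hij
  · -- coupling
    refine ⟨⟨Stmt13Aux.QPCA T e, Stmt13Aux.QPCA_marginal T e⟩, ?_⟩
    intro ζ hζ
    exact hQmono ζ hζ
end
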